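/- arXiv:2204.09129 — 3 statements merged into one kernel-verified Lean document; each statement's English description precedes it below -/
import Mathlib

section
/- Let n, k ≥ 1 be integers, let σ = (π, ε) be a signed permutation of [n], let α ≥ 2k+1 be real, and let x_σ ∈ ℝ^n be the associated vector. Then for all x, y ∈ ℤ^n with all coordinates in [−k, k], one has x_σᵀx < x_σᵀy if and only if there exists j ∈ {1,…,n} such that ε(π⁻¹(j))·(y_{π⁻¹(j)} − x_{π⁻¹(j)}) > 0 and x_{π⁻¹(i)} = y_{π⁻¹(i)} for all i with j < i ≤ n. That is, x_σᵀ induces the lexicographic order on the signed, permuted coordinates of lattice points of [−k,k]^n. -/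
open Set Finset

/-- The vector `x_σ` associated to a signed permutation `σ = (π, ε)` of `[n]` and
a real number `α`, with `(x_σ)_i = ε(i)·α^{π(i)}` where `π(i)` ranges over `{1,…,n}`. -/
def signedPermVec {n : ℕ} (π : Equiv.Perm (Fin n)) (ε : Fin n → ℝ) (α : ℝ) : Fin n → ℝ :=
  fun i => ε i * α ^ ((π i : ℕ) + 1)



lemma tail_bound {n : ℕ} (α : ℝ) (k : ℕ) (hk : 1 ≤ k)
    (hα : 2 * (k : ℝ) + 1 ≤ α)
    (d : Fin n → ℝ) (hd2 : ∀ i, |d i| ≤ 2 * k)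
    (j : Fin n) :
    |∑ i ∈ Finset.Iio j, d i * α ^ ((i : ℕ) + 1)| < α ^ ((j : ℕ) + 1) := by
  have hk1 : (1:ℝ) ≤ (k:ℝ) := by exact_mod_cast hk
  have hα1 : (1:ℝ) < α := by linarith
  have hα0 : (0:ℝ) < α := by linarith
  have h1 : |∑ i ∈ Finset.Iio j, d i * α ^ ((i : ℕ) + 1)|
      ≤ ∑ i ∈ Finset.Iio j, 2 * (k:ℝ) * α ^ ((i : ℕ) + 1) := by
    refine (Finset.abs_sum_le_sum_abs _ _).trans (Finset.sum_le_sum fun i _ => ?_)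
    rw [abs_mul, abs_pow, abs_of_pos hα0]
    exact mul_le_mul_of_nonneg_right (hd2 i) (by positivity)
  have h2 : ∑ i ∈ Finset.Iio j, 2 * (k:ℝ) * α ^ ((i : ℕ) + 1)
      = ∑ m ∈ Finset.range (j : ℕ), 2 * (k:ℝ) * α ^ (m + 1) := by
    rw [← Nat.Iio_eq_range, ← Fin.map_valEmbedding_Iio, Finset.sum_map]
    rfl
  set m := (j : ℕ)
  have hg : (∑ i ∈ Finset.range m, α ^ i) * (α - 1) = α ^ m - 1 := geom_sum_mul α m
  have hS0 : (0:ℝ) ≤ ∑ i ∈ Finset.range m, α ^ i :=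
    Finset.sum_nonneg fun i _ => by positivity
  have h3 : ∑ i ∈ Finset.range m, 2 * (k:ℝ) * α ^ (i + 1)
      = 2 * (k:ℝ) * α * ∑ i ∈ Finset.range m, α ^ i := by
    rw [Finset.mul_sum]
    exact Finset.sum_congr rfl fun i _ => by ring
  have hm1 : (1:ℝ) ≤ α ^ m := one_le_pow₀ hα1.le
  have h4 : 2 * (k:ℝ) * α * ∑ i ∈ Finset.range m, α ^ i < α ^ (m + 1) := by
    have h5 : 2 * (k:ℝ) * (∑ i ∈ Finset.range m, α ^ i)
        ≤ (∑ i ∈ Finset.range m, α ^ i) * (α - 1) := by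
      rw [mul_comm]
      exact mul_le_mul_of_nonneg_left (by linarith) hS0
    rw [pow_succ]
    nlinarith
  calc |∑ i ∈ Finset.Iio j, d i * α ^ ((i : ℕ) + 1)| ≤ _ := h1
    _ < α ^ (m + 1) := by rw [h2, h3]; exact h4

lemma top_sign {n : ℕ} (α : ℝ) (k : ℕ) (hk : 1 ≤ k)
    (hα : 2 * (k : ℝ) + 1 ≤ α)
    (d : Fin n → ℝ) (hd2 : ∀ i, |d i| ≤ 2 * k)
    (j : Fin n) (hj : ∀ i, j < i → d i = 0) (hdj : 1 ≤ |d j|) :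
    (0 < ∑ i, d i * α ^ ((i : ℕ) + 1)) ↔ 0 < d j := by
  classical
  have hsplit : ∑ i, d i * α ^ ((i : ℕ) + 1)
      = (∑ i ∈ Finset.Iio j, d i * α ^ ((i : ℕ) + 1)) + d j * α ^ ((j : ℕ) + 1) := by
    rw [← Finset.sum_erase_add Finset.univ _ (Finset.mem_univ j)]
    congr 1
    refine (Finset.sum_subset (fun i hi => ?_) (fun i hi hni => ?_)).symm
    · exact Finset.mem_erase.2 ⟨(Finset.mem_Iio.1 hi).ne, Finset.mem_univ i⟩
    · have : j < i := lt_of_le_of_ne (not_lt.1 (fun h => hni (Finset.mem_Iio.2 h)))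
        (Ne.symm (Finset.mem_erase.1 hi).1)
      rw [hj i this, zero_mul]
  have hB := tail_bound α k hk hα d hd2 j
  have hA : (0:ℝ) < α ^ ((j : ℕ) + 1) := by
    have : (0:ℝ) < α := by
      have : (1:ℝ) ≤ k := by exact_mod_cast hk
      linarith
    positivity
  rw [hsplit]
  rcases abs_cases (d j) with ⟨he, _⟩ | ⟨he, hneg⟩
  · have h1 : 1 ≤ d j := he ▸ hdj
    constructor
    · intro _; linarith
    · intro _
      have := (abs_lt.1 hB).1
      nlinarith
  · have h1 : d j ≤ -1 := by rw [he] at hdj; linarith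
    constructor
    · intro h
      have := (abs_lt.1 hB).2
      nlinarith
    · intro h; linarith


theorem signedPermVec_lex_order' {n : ℕ} (k : ℕ) (hn : 1 ≤ n) (hk : 1 ≤ k)
    (π : Equiv.Perm (Fin n)) (ε : Fin n → ℝ) (hε : ∀ i, ε i = 1 ∨ ε i = -1)
    (α : ℝ) (hα : 2 * (k : ℝ) + 1 ≤ α)
    (x y : Fin n → ℤ)
    (hx : ∀ i, -(k : ℤ) ≤ x i ∧ x i ≤ (k : ℤ))
    (hy : ∀ i, -(k : ℤ) ≤ y i ∧ y i ≤ (k : ℤ)) :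
    ((∑ i, (ε i * α ^ ((π i : ℕ) + 1)) * (x i : ℝ)) <
        (∑ i, (ε i * α ^ ((π i : ℕ) + 1)) * (y i : ℝ))) ↔
      ∃ j : Fin n,
        0 < ε (π.symm j) * ((y (π.symm j) : ℝ) - (x (π.symm j) : ℝ)) ∧
        ∀ i : Fin n, j < i → x (π.symm i) = y (π.symm i) := by
  classical
  set d : Fin n → ℝ :=
    fun j => ε (π.symm j) * ((y (π.symm j) : ℝ) - (x (π.symm j) : ℝ)) with hd
  have habsε : ∀ i, |ε i| = 1 := by
    intro i; rcases hε i with h | h <;> rw [h] <;> norm_num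
  have hεne : ∀ i, ε i ≠ 0 := by
    intro i; rcases hε i with h | h <;> rw [h] <;> norm_num
  have habs : ∀ j, |d j| = |(y (π.symm j) : ℝ) - (x (π.symm j) : ℝ)| := by
    intro j; rw [hd]; rw [abs_mul, habsε, one_mul]
  have hd2 : ∀ j, |d j| ≤ 2 * k := by
    intro j
    rw [habs, abs_le]
    have h1 := hx (π.symm j); have h2 := hy (π.symm j)
    have a1 : (-(k:ℝ)) ≤ (x (π.symm j) : ℝ) := by exact_mod_cast h1.1
    have a2 : ((x (π.symm j) : ℝ)) ≤ k := by exact_mod_cast h1.2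
    have a3 : (-(k:ℝ)) ≤ (y (π.symm j) : ℝ) := by exact_mod_cast h2.1
    have a4 : ((y (π.symm j) : ℝ)) ≤ k := by exact_mod_cast h2.2
    constructor <;> linarith
  have hzero : ∀ j, d j = 0 ↔ x (π.symm j) = y (π.symm j) := by
    intro j
    rw [hd]
    simp only [mul_eq_zero, sub_eq_zero]
    constructor
    · rintro (h | h)
      · exact absurd h (hεne _)
      · exact_mod_cast h.symm
    · intro h; right; exact_mod_cast h.symm
  have hd1 : ∀ j, d j ≠ 0 → 1 ≤ |d j| := by
    intro j hj
    rw [habs]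
    have hne : y (π.symm j) - x (π.symm j) ≠ 0 := by
      intro h
      exact hj ((hzero j).2 (by omega))
    have h1 : (1:ℤ) ≤ |y (π.symm j) - x (π.symm j)| := Int.one_le_abs hne
    have : ((y (π.symm j) : ℝ) - (x (π.symm j) : ℝ)) = ((y (π.symm j) - x (π.symm j) : ℤ) : ℝ) := by
      push_cast; ring
    rw [this, ← Int.cast_abs]
    exact_mod_cast h1
  have hsum : ∑ i, (ε i * α ^ ((π i : ℕ) + 1)) * ((y i : ℝ) - (x i : ℝ))
      = ∑ j, d j * α ^ ((j : ℕ) + 1) := by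
    refine Fintype.sum_equiv π _ _ fun i => ?_
    rw [hd]
    simp only [Equiv.symm_apply_apply]
    ring
  have hmain : ((∑ i, (ε i * α ^ ((π i : ℕ) + 1)) * (x i : ℝ)) <
      (∑ i, (ε i * α ^ ((π i : ℕ) + 1)) * (y i : ℝ)))
      ↔ 0 < ∑ j, d j * α ^ ((j : ℕ) + 1) := by
    rw [← sub_pos, ← hsum, ← Finset.sum_sub_distrib]
    congr! 1 with
    refine Finset.sum_congr rfl fun i _ => by ring
  rw [hmain]
  constructor
  · intro hpos
    have hne : ∃ i, d i ≠ 0 := by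
      by_contra h
      push_neg at h
      rw [Finset.sum_eq_zero (fun i _ => by rw [h i, zero_mul])] at hpos
      exact lt_irrefl 0 hpos
    set S : Finset (Fin n) := Finset.univ.filter (fun i => d i ≠ 0) with hS
    have hSne : S.Nonempty := by
      obtain ⟨i, hi⟩ := hne
      exact ⟨i, by simp [hS, hi]⟩
    set j := S.max' hSne with hjdef
    have hjS : j ∈ S := S.max'_mem hSne
    have hjne : d j ≠ 0 := (Finset.mem_filter.1 hjS).2
    have hj : ∀ i, j < i → d i = 0 := by
      intro i hi
      by_contra h
      exact absurd (S.le_max' i (by simp [hS, h])) (not_le.2 hi)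
    have := (top_sign α k hk hα d hd2 j hj (hd1 j hjne)).1 hpos
    exact ⟨j, this, fun i hi => (hzero i).1 (hj i hi)⟩
  · rintro ⟨j, hpos, heq⟩
    have hj : ∀ i, j < i → d i = 0 := fun i hi => (hzero i).2 (heq i hi)
    have hdj : 1 ≤ |d j| := hd1 j (ne_of_gt hpos)
    exact (top_sign α k hk hα d hd2 j hj hdj).2 hpos

/-- **Lemma (x_σ induces the lexicographic order).**
Let `n, k ≥ 1`, let `σ = (π, ε)` be a signed permutation of `[n]`, let
`α ≥ 2k+1`, and let `x_σ` be the associated vector. Then for all lattice points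
`x, y ∈ ℤ^n ∩ [−k,k]^n`, one has `x_σᵀx < x_σᵀy` if and only if there exists
`j ∈ [n]` with `ε(π⁻¹(j))·(y_{π⁻¹(j)} − x_{π⁻¹(j)}) > 0` and
`x_{π⁻¹(i)} = y_{π⁻¹(i)}` for all `i > j`. -/
theorem signedPermVec_lex_order {n : ℕ} (k : ℕ) (hn : 1 ≤ n) (hk : 1 ≤ k)
    (π : Equiv.Perm (Fin n)) (ε : Fin n → ℝ) (hε : ∀ i, ε i = 1 ∨ ε i = -1)
    (α : ℝ) (hα : 2 * (k : ℝ) + 1 ≤ α)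
    (x y : Fin n → ℤ)
    (hx : ∀ i, -(k : ℤ) ≤ x i ∧ x i ≤ (k : ℤ))
    (hy : ∀ i, -(k : ℤ) ≤ y i ∧ y i ≤ (k : ℤ)) :
    (∑ i, signedPermVec π ε α i * (x i : ℝ)) <
        (∑ i, signedPermVec π ε α i * (y i : ℝ)) ↔
      ∃ j : Fin n,
        0 < ε (π.symm j) * ((y (π.symm j) : ℝ) - (x (π.symm j) : ℝ)) ∧
        ∀ i : Fin n, j < i → x (π.symm i) = y (π.symm i) := by
  simp only [signedPermVec]
  exact signedPermVec_lex_order' k hn hk π ε hε α hα x y hx hy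
end

section
/- Let P ⊆ ℝ^n be a (0,k)-lattice polytope, let σ = (π, ε) be a signed permutation of [n], let α ≥ 2k+1 be real, and let x_σ ∈ ℝ^n be the associated vector. Define a decreasing chain of sets by G_n = P and, for i = n, n−1, …, 1, G_{i−1} = {x ∈ G_i : ε(π⁻¹(i))·x_{π⁻¹(i)} = max_{y ∈ G_i} ε(π⁻¹(i))·y_{π⁻¹(i)}}. Then G_0 is a singleton {v}, where v is the unique vertex of P maximizing x ↦ x_σᵀx over P. -/
open Set Finset

/-- The standard dot product on `Fin n → ℝ`. -/
def dotp {n : ℕ} (c x : Fin n → ℝ) : ℝ := ∑ i, c i * x i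

section AuxLemmas

variable {n : ℕ}

lemma dotp_isLinear (c : Fin n → ℝ) : IsLinearMap ℝ (dotp c) := by
  constructor
  · intro x y
    simp only [dotp, Pi.add_apply, mul_add, Finset.sum_add_distrib]
  · intro r x
    simp only [dotp, Pi.smul_apply, smul_eq_mul, Finset.mul_sum]
    exact Finset.sum_congr rfl fun i _ => by ring

lemma coordfn_isLinear (b : ℝ) (j : Fin n) :
    IsLinearMap ℝ (fun x : Fin n → ℝ => b * x j) := by
  constructor
  · intro x y; simp [mul_add]
  · intro r x; simp [Pi.smul_apply, smul_eq_mul]; ring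

lemma le_of_mem_convexHull {T : Finset (Fin n → ℝ)} {g : (Fin n → ℝ) → ℝ}
    (hg : IsLinearMap ℝ g) {M : ℝ} (hM : ∀ t ∈ T, g t ≤ M) {x}
    (hx : x ∈ convexHull ℝ (T : Set (Fin n → ℝ))) : g x ≤ M :=
  convexHull_min (fun t ht => hM t ht) (convex_halfSpace_le hg M) hx

lemma ge_of_mem_convexHull {T : Finset (Fin n → ℝ)} {g : (Fin n → ℝ) → ℝ}
    (hg : IsLinearMap ℝ g) {M : ℝ} (hM : ∀ t ∈ T, M ≤ g t) {x}
    (hx : x ∈ convexHull ℝ (T : Set (Fin n → ℝ))) : M ≤ g x :=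
  convexHull_min (fun t ht => hM t ht) (convex_halfSpace_ge hg M) hx

/-- The set of maximizers of a linear coordinate functional over the convex hull of a
finite set is the convex hull of the maximizers within the finite set. -/
lemma face_convexHull (T : Finset (Fin n → ℝ)) (b : ℝ) (j : Fin n) :
    {x ∈ convexHull ℝ (T : Set (Fin n → ℝ)) |
        ∀ y ∈ convexHull ℝ (T : Set (Fin n → ℝ)), b * y j ≤ b * x j}
      = convexHull ℝ ((T.filter fun t => ∀ u ∈ T, b * u j ≤ b * t j : Finset _) :
          Set (Fin n → ℝ)) := by
  classical
  have hg : IsLinearMap ℝ (fun x : Fin n → ℝ => b * x j) := coordfn_isLinear b j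
  ext x
  constructor
  · rintro ⟨hx, hmax⟩
    rw [Finset.convexHull_eq] at hx
    obtain ⟨w, hw0, hw1, hwx⟩ := hx
    have hxsum : x = ∑ y ∈ T, w y • y := by
      rw [← hwx, Finset.centerMass_eq_of_sum_1 _ _ hw1]
      simp
    have hgx : b * x j = ∑ y ∈ T, w y * (b * y j) := by
      rw [hxsum, Finset.sum_apply, Finset.mul_sum]
      exact Finset.sum_congr rfl fun y _ => by
        simp only [Pi.smul_apply, smul_eq_mul]; ring
    have hgle : ∀ y ∈ T, b * y j ≤ b * x j := fun y hy =>
      hmax y (subset_convexHull ℝ _ hy)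
    have hzero : ∑ y ∈ T, w y * (b * x j - b * y j) = 0 := by
      have h1 : ∑ y ∈ T, w y * (b * x j) = b * x j := by
        rw [← Finset.sum_mul, hw1, one_mul]
      have h2 : ∑ y ∈ T, w y * (b * x j - b * y j)
          = ∑ y ∈ T, w y * (b * x j) - ∑ y ∈ T, w y * (b * y j) := by
        rw [← Finset.sum_sub_distrib]
        exact Finset.sum_congr rfl fun y _ => by ring
      rw [h2, h1, ← hgx, sub_self]
    have hkey : ∀ y ∈ T, w y ≠ 0 → b * y j = b * x j := by
      intro y hy hwy
      have h := (Finset.sum_eq_zero_iff_of_nonneg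
        (fun y hy => mul_nonneg (hw0 y hy) (sub_nonneg.2 (hgle y hy)))).1 hzero y hy
      rcases mul_eq_zero.1 h with h' | h'
      · exact absurd h' hwy
      · linarith [sub_eq_zero.1 h']
    have hxc : x = (T.filter fun y => w y ≠ 0).centerMass w id := by
      rw [Finset.centerMass_filter_ne_zero, hwx]
    rw [hxc]
    apply Finset.centerMass_mem_convexHull
    · intro y hy; exact hw0 y (Finset.mem_of_mem_filter y hy)
    · rw [Finset.sum_filter_ne_zero, hw1]; norm_num
    · intro y hy
      obtain ⟨hyT, hwy⟩ := Finset.mem_filter.1 hy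
      have hgy := hkey y hyT hwy
      simp only [Finset.coe_filter, Set.mem_setOf_eq, id]
      exact ⟨hyT, fun u hu => by linarith [hgle u hu]⟩
  · intro hx
    have hsub : (T.filter fun t => ∀ u ∈ T, b * u j ≤ b * t j) ⊆ T :=
      Finset.filter_subset _ _
    have hxT : x ∈ convexHull ℝ (T : Set (Fin n → ℝ)) :=
      convexHull_mono (by exact_mod_cast hsub) hx
    have hne : (T.filter fun t => ∀ u ∈ T, b * u j ≤ b * t j).Nonempty := by
      by_contra h
      rw [Finset.not_nonempty_iff_eq_empty] at h
      rw [h] at hx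
      simp at hx
    obtain ⟨t0, ht0⟩ := hne
    obtain ⟨ht0T, ht0max⟩ := Finset.mem_filter.1 ht0
    have hgxle : b * x j ≤ b * t0 j := by
      refine le_of_mem_convexHull hg (fun t ht => ?_) hx
      exact ht0max t (Finset.mem_filter.1 ht).1
    have hgxge : b * t0 j ≤ b * x j := by
      refine ge_of_mem_convexHull hg (fun t ht => ?_) hx
      exact (Finset.mem_filter.1 ht).2 t0 ht0T
    refine ⟨hxT, fun y hy => ?_⟩
    have hyle : b * y j ≤ b * t0 j := le_of_mem_convexHull hg ht0max hy
    linarith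

/-- Geometric sum bound: `k ⬝ (β + β² + ⋯ + β^m) ≤ β^(m+1)/2` when `2k+1 ≤ β`. -/
lemma geom_aux (β k : ℝ) (hk : 0 ≤ k) (hβ : 2 * k + 1 ≤ β) (m : ℕ) :
    k * ∑ s ∈ Finset.range m, β ^ (s + 1) ≤ β ^ (m + 1) / 2 := by
  have hβ1 : (1 : ℝ) ≤ β := by linarith
  have h1 : (∑ s ∈ Finset.range m, β ^ s) * (β - 1) = β ^ m - 1 := geom_sum_mul β m
  have h2 : ∑ s ∈ Finset.range m, β ^ (s + 1) = (∑ s ∈ Finset.range m, β ^ s) * β := by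
    rw [Finset.sum_mul]
    exact Finset.sum_congr rfl fun s _ => by rw [pow_succ]
  have hpos : (0 : ℝ) ≤ ∑ s ∈ Finset.range m, β ^ s :=
    Finset.sum_nonneg fun s _ => pow_nonneg (by linarith) s
  have hβm : (0 : ℝ) ≤ β ^ m := pow_nonneg (by linarith) m
  have hsucc : β ^ (m + 1) = β ^ m * β := pow_succ β m
  nlinarith [mul_nonneg hpos (by linarith : (0:ℝ) ≤ β)]

lemma fin_ite_lt_sum {n : ℕ} (m : ℕ) (hmn : m ≤ n) (f : ℕ → ℝ) :
    ∑ t : Fin n, (if (t : ℕ) < m then f (t : ℕ) else 0)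
      = ∑ s ∈ Finset.range m, f s := by
  rw [Fin.sum_univ_eq_sum_range (fun s => if s < m then f s else 0) n]
  rw [← Finset.sum_subset (Finset.range_subset_range.2 hmn)
    (fun x _ hxm => by rw [if_neg (by simp [Finset.mem_range] at hxm; omega)])]
  exact Finset.sum_congr rfl fun s hs => if_pos (Finset.mem_range.1 hs)

/-- Core estimate: a geometrically weighted sum whose top nonzero coefficient is `≥ 1`
is at least half the top weight. -/
lemma core_est {n : ℕ} (β k : ℝ) (hk : 0 ≤ k) (hβ : 2 * k + 1 ≤ β)
    (d : Fin n → ℝ) (hdk : ∀ t, |d t| ≤ k)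
    (i : ℕ) (m : Fin n) (him : i ≤ (m : ℕ)) (hm : 1 ≤ d m)
    (htop : ∀ t : Fin n, (m : ℕ) < (t : ℕ) → d t = 0) :
    β ^ ((m : ℕ) + 1) / 2
      ≤ ∑ t ∈ univ.filter (fun t : Fin n => i ≤ (t : ℕ)), β ^ ((t : ℕ) + 1) * d t := by
  classical
  have hβ0 : (0 : ℝ) ≤ β := by linarith
  set F := univ.filter (fun t : Fin n => i ≤ (t : ℕ)) with hF
  have hmF : m ∈ F := by simp [hF, him]
  rw [← Finset.add_sum_erase F _ hmF]
  have hb1 : β ^ ((m : ℕ) + 1) ≤ β ^ ((m : ℕ) + 1) * d m :=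
    le_mul_of_one_le_right (pow_nonneg hβ0 _) hm
  have hbound : -(k * ∑ s ∈ Finset.range (m : ℕ), β ^ (s + 1))
      ≤ ∑ t ∈ F.erase m, β ^ ((t : ℕ) + 1) * d t := by
    have hstep : ∀ t ∈ F.erase m,
        (if (t : ℕ) < (m : ℕ) then -(β ^ ((t : ℕ) + 1) * k) else 0)
          ≤ β ^ ((t : ℕ) + 1) * d t := by
      intro t ht
      rcases lt_trichotomy ((t : ℕ)) ((m : ℕ)) with h | h | h
      · rw [if_pos h]
        have h1 := (abs_le.1 (hdk t)).1
        have h2 : (0:ℝ) ≤ β ^ ((t : ℕ) + 1) := pow_nonneg hβ0 _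
        nlinarith
      · exact absurd (Fin.ext h) (Finset.mem_erase.1 ht).1
      · rw [if_neg (by omega), htop t h, mul_zero]
    have h1 : (∑ t ∈ F.erase m, if (t : ℕ) < (m : ℕ) then -(β ^ ((t : ℕ) + 1) * k) else 0)
        ≤ ∑ t ∈ F.erase m, β ^ ((t : ℕ) + 1) * d t := Finset.sum_le_sum hstep
    refine le_trans ?_ h1
    have h2 : (∑ t : Fin n, -(if (t : ℕ) < (m : ℕ) then -(β ^ ((t : ℕ) + 1) * k) else 0))
        ≥ ∑ t ∈ F.erase m, -(if (t : ℕ) < (m : ℕ) then -(β ^ ((t : ℕ) + 1) * k) else 0) := by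
      apply Finset.sum_le_sum_of_subset_of_nonneg (Finset.subset_univ _)
      intro t _ _
      split_ifs with h
      · simp only [neg_neg]
        exact mul_nonneg (pow_nonneg hβ0 _) hk
      · simp
    have h2' : (∑ t : Fin n, if (t : ℕ) < (m : ℕ) then -(β ^ ((t : ℕ) + 1) * k) else 0)
        ≤ ∑ t ∈ F.erase m, if (t : ℕ) < (m : ℕ) then -(β ^ ((t : ℕ) + 1) * k) else 0 := by
      rw [Finset.sum_neg_distrib, Finset.sum_neg_distrib] at h2
      linarith
    refine le_trans ?_ h2'
    have h3 : (∑ t : Fin n, if (t : ℕ) < (m : ℕ) then -(β ^ ((t : ℕ) + 1) * k) else 0)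
        = ∑ s ∈ Finset.range (m : ℕ), -(β ^ (s + 1) * k) :=
      fin_ite_lt_sum (m : ℕ) (le_of_lt m.isLt) (fun s => -(β ^ (s + 1) * k))
    have h4 : ∑ s ∈ Finset.range (m : ℕ), -(β ^ (s + 1) * k)
        = -(k * ∑ s ∈ Finset.range (m : ℕ), β ^ (s + 1)) := by
      rw [Finset.sum_neg_distrib, Finset.mul_sum]
      congr 1
      exact Finset.sum_congr rfl fun s _ => by ring
    rw [h3, h4]
  have hg := geom_aux β k hk hβ (m : ℕ)
  linarith

/-- If the tail sum (indices `≥ i+1`) is positive then so is the fuller sum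
(indices `≥ i`), for integer coefficients bounded by `k`. -/
lemma gap_step {n : ℕ} (β k : ℝ) (hk : 0 ≤ k) (hβ : 2 * k + 1 ≤ β)
    (d : Fin n → ℝ) (hdz : ∀ t, ∃ z : ℤ, d t = (z : ℝ)) (hdk : ∀ t, |d t| ≤ k) (i : ℕ)
    (hpos : 0 < ∑ t ∈ univ.filter (fun t : Fin n => i + 1 ≤ (t : ℕ)),
      β ^ ((t : ℕ) + 1) * d t) :
    0 < ∑ t ∈ univ.filter (fun t : Fin n => i ≤ (t : ℕ)), β ^ ((t : ℕ) + 1) * d t := by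
  classical
  have hβ1 : (1 : ℝ) ≤ β := by linarith
  have hβ0 : (0 : ℝ) < β := by linarith
  set A := univ.filter (fun t : Fin n => i + 1 ≤ (t : ℕ) ∧ d t ≠ 0) with hA
  have hAne : A.Nonempty := by
    by_contra h
    rw [Finset.not_nonempty_iff_eq_empty] at h
    have hz : ∀ t ∈ univ.filter (fun t : Fin n => i + 1 ≤ (t : ℕ)),
        β ^ ((t : ℕ) + 1) * d t = 0 := by
      intro t ht
      have ht' := (Finset.mem_filter.1 ht).2
      have htA : t ∉ A := by rw [h]; exact Finset.notMem_empty t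
      simp only [hA, Finset.mem_filter, Finset.mem_univ, true_and, not_and, not_not] at htA
      rw [htA ht', mul_zero]
    rw [Finset.sum_eq_zero hz] at hpos
    linarith
  set m := A.max' hAne with hmdef
  have hmA : m ∈ A := A.max'_mem hAne
  obtain ⟨hmi, hmd⟩ := (Finset.mem_filter.1 hmA).2
  have htop : ∀ t : Fin n, (m : ℕ) < (t : ℕ) → d t = 0 := by
    intro t ht
    by_contra hd
    have htA : t ∈ A := by
      simp only [hA, Finset.mem_filter, Finset.mem_univ, true_and]
      exact ⟨by omega, hd⟩
    have := A.le_max' t htA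
    rw [← hmdef] at this
    exact absurd (lt_of_le_of_lt this (by exact_mod_cast ht : m < t)) (lt_irrefl _)
  have hdm1 : 1 ≤ d m ∨ d m ≤ -1 := by
    obtain ⟨z, hz⟩ := hdz m
    rcases lt_trichotomy z 0 with h | h | h
    · right; rw [hz]; exact_mod_cast (by omega : z ≤ -1)
    · exact absurd (by rw [hz, h]; norm_num) hmd
    · left; rw [hz]; exact_mod_cast (by omega : (1:ℤ) ≤ z)
  have hcore : β ^ ((m : ℕ) + 1) / 2
      ≤ ∑ t ∈ univ.filter (fun t : Fin n => i + 1 ≤ (t : ℕ)), β ^ ((t : ℕ) + 1) * d t := by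
    rcases hdm1 with h | h
    · exact core_est β k hk hβ d hdk (i + 1) m hmi h htop
    · exfalso
      have hneg := core_est β k hk hβ (fun t => -d t)
        (fun t => by show |(-d t)| ≤ k; rw [abs_neg]; exact hdk t) (i + 1) m hmi
        (by show (1:ℝ) ≤ -d m; linarith)
        (fun t ht => by show -d t = 0; rw [htop t ht]; ring)
      have hsum : ∑ t ∈ univ.filter (fun t : Fin n => i + 1 ≤ (t : ℕ)),
          β ^ ((t : ℕ) + 1) * (-d t)
          = -∑ t ∈ univ.filter (fun t : Fin n => i + 1 ≤ (t : ℕ)),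
              β ^ ((t : ℕ) + 1) * d t := by
        rw [← Finset.sum_neg_distrib]
        exact Finset.sum_congr rfl fun t _ => by ring
      rw [hsum] at hneg
      have : (0:ℝ) < β ^ ((m : ℕ) + 1) := pow_pos hβ0 _
      linarith
  by_cases hi : i < n
  · have hj : (⟨i, hi⟩ : Fin n) ∉ univ.filter (fun t : Fin n => i + 1 ≤ (t : ℕ)) := by
      simp
    have hins : univ.filter (fun t : Fin n => i ≤ (t : ℕ))
        = insert (⟨i, hi⟩ : Fin n) (univ.filter (fun t : Fin n => i + 1 ≤ (t : ℕ))) := by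
      ext t
      simp only [Finset.mem_filter, Finset.mem_univ, true_and, Finset.mem_insert, Fin.ext_iff]
      omega
    rw [hins, Finset.sum_insert hj]
    have hdj := (abs_le.1 (hdk ⟨i, hi⟩)).1
    have hpi : (0:ℝ) < β ^ (i + 1) := pow_pos hβ0 _
    have hmono : β ^ (i + 1 + 1) ≤ β ^ ((m : ℕ) + 1) := by
      apply pow_le_pow_right₀ hβ1
      omega
    have hsucc : β ^ (i + 1 + 1) = β ^ (i + 1) * β := pow_succ β (i + 1)
    nlinarith
  · exfalso
    have : univ.filter (fun t : Fin n => i + 1 ≤ (t : ℕ)) = (∅ : Finset (Fin n)) := by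
      ext t
      simp only [Finset.mem_filter, Finset.mem_univ, true_and, Finset.notMem_empty, iff_false]
      omega
    rw [this, Finset.sum_empty] at hpos
    linarith

/-- If the full weighted sum vanishes then all coefficients vanish. -/
lemma all_zero {n : ℕ} (β k : ℝ) (hk : 0 ≤ k) (hβ : 2 * k + 1 ≤ β)
    (d : Fin n → ℝ) (hdz : ∀ t, ∃ z : ℤ, d t = (z : ℝ)) (hdk : ∀ t, |d t| ≤ k)
    (h0 : ∑ t ∈ univ.filter (fun t : Fin n => 0 ≤ (t : ℕ)), β ^ ((t : ℕ) + 1) * d t = 0) :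
    ∀ t, d t = 0 := by
  classical
  have hβ0 : (0 : ℝ) < β := by linarith
  by_contra h
  push_neg at h
  obtain ⟨t0, ht0⟩ := h
  set A := univ.filter (fun t : Fin n => d t ≠ 0) with hA
  have hAne : A.Nonempty := ⟨t0, by simp [hA, ht0]⟩
  set m := A.max' hAne with hmdef
  have hmA : m ∈ A := A.max'_mem hAne
  have hmd : d m ≠ 0 := (Finset.mem_filter.1 hmA).2
  have htop : ∀ t : Fin n, (m : ℕ) < (t : ℕ) → d t = 0 := by
    intro t ht
    by_contra hd
    have htA : t ∈ A := by simp [hA, hd]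
    have := A.le_max' t htA
    rw [← hmdef] at this
    exact absurd (lt_of_le_of_lt this (by exact_mod_cast ht : m < t)) (lt_irrefl _)
  have hdm1 : 1 ≤ d m ∨ d m ≤ -1 := by
    obtain ⟨z, hz⟩ := hdz m
    rcases lt_trichotomy z 0 with h | h | h
    · right; rw [hz]; exact_mod_cast (by omega : z ≤ -1)
    · exact absurd (by rw [hz, h]; norm_num) hmd
    · left; rw [hz]; exact_mod_cast (by omega : (1:ℤ) ≤ z)
  have hppos : (0:ℝ) < β ^ ((m : ℕ) + 1) := pow_pos hβ0 _
  rcases hdm1 with h | h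
  · have := core_est β k hk hβ d hdk 0 m (Nat.zero_le _) h htop
    linarith
  · have hneg := core_est β k hk hβ (fun t => -d t)
      (fun t => by show |(-d t)| ≤ k; rw [abs_neg]; exact hdk t) 0 m (Nat.zero_le _)
      (by show (1:ℝ) ≤ -d m; linarith)
      (fun t ht => by show -d t = 0; rw [htop t ht]; ring)
    have hsum : ∑ t ∈ univ.filter (fun t : Fin n => 0 ≤ (t : ℕ)),
        β ^ ((t : ℕ) + 1) * (-d t)
        = -∑ t ∈ univ.filter (fun t : Fin n => 0 ≤ (t : ℕ)), β ^ ((t : ℕ) + 1) * d t := by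
      rw [← Finset.sum_neg_distrib]
      exact Finset.sum_congr rfl fun t _ => by ring
    rw [hsum, h0] at hneg
    linarith

end AuxLemmas

/-- A polytope is the convex hull of a finite nonempty set of points. -/
def IsPolytope {n : ℕ} (P : Set (Fin n → ℝ)) : Prop :=
  ∃ S : Finset (Fin n → ℝ), S.Nonempty ∧ P = convexHull ℝ (S : Set (Fin n → ℝ))

/-- The dimension of a polytope: the dimension of its affine hull. -/
noncomputable def polytopeDim {n : ℕ} (P : Set (Fin n → ℝ)) : ℕ :=
  Module.finrank ℝ (affineSpan ℝ P).direction

/-- A vertex of a polytope is an extreme point. -/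
def IsVertexOf {n : ℕ} (P : Set (Fin n → ℝ)) (v : Fin n → ℝ) : Prop :=
  v ∈ Set.extremePoints ℝ P

/-- An edge of a polytope: a segment between two distinct vertices that is an
exposed face of `P`; its endpoints are then called neighbors. -/
def IsEdgeOf {n : ℕ} (P : Set (Fin n → ℝ)) (u v : Fin n → ℝ) : Prop :=
  u ≠ v ∧ IsVertexOf P u ∧ IsVertexOf P v ∧ IsExposed ℝ P (segment ℝ u v)

/-- A `c`-monotone path of length `m` in `P`: a sequence of `m+1` vertices of `P`
such that consecutive vertices form edges of `P` and the value of `cᵀx` strictly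
increases along the path. -/
def IsMonotonePath {n : ℕ} (P : Set (Fin n → ℝ)) (c : Fin n → ℝ) (m : ℕ)
    (p : Fin (m + 1) → (Fin n → ℝ)) : Prop :=
  (∀ i, IsVertexOf P (p i)) ∧
  ∀ i : Fin m, IsEdgeOf P (p i.castSucc) (p i.succ) ∧
    dotp c (p i.castSucc) < dotp c (p i.succ)

/-- A `(0,k)`-lattice polytope: a polytope all of whose vertices lie in
`ℤ^n ∩ [0,k]^n`. -/
def IsLatticePolytope {n : ℕ} (k : ℕ) (P : Set (Fin n → ℝ)) : Prop :=
  IsPolytope P ∧ ∀ v, IsVertexOf P v → ∀ i, (∃ z : ℤ, v i = (z : ℝ)) ∧ 0 ≤ v i ∧ v i ≤ (k : ℝ)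

/-- **Corollary (flag of faces reaching the `x_σ`-maximal vertex).**
Let `P ⊆ ℝ^n` be a `(0,k)`-lattice polytope, `σ = (π, ε)` a signed permutation,
`α ≥ 2k+1`, and `x_σ` the associated vector. Define `G_n = P` and, for
`i = n, …, 1`, let `G_{i−1}` be the set of points of `G_i` maximizing
`ε(π⁻¹(i))·x_{π⁻¹(i)}` over `G_i`. Then `G_0` is a singleton `{v}`, where `v`
is the unique vertex of `P` maximizing `x_σᵀx` over `P`. -/

theorem flag_of_faces_singleton {n : ℕ} (k : ℕ) (P : Set (Fin n → ℝ))
    (hP : IsLatticePolytope k P)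
    (π : Equiv.Perm (Fin n)) (ε : Fin n → ℝ) (hε : ∀ i, ε i = 1 ∨ ε i = -1)
    (α : ℝ) (hα : 2 * (k : ℝ) + 1 ≤ α)
    (G : ℕ → Set (Fin n → ℝ))
    (hGtop : G n = P)
    (hGstep : ∀ i : Fin n, G (i : ℕ) =
      {x ∈ G ((i : ℕ) + 1) | ∀ y ∈ G ((i : ℕ) + 1),
        ε (π.symm i) * y (π.symm i) ≤ ε (π.symm i) * x (π.symm i)}) :
    ∃ v : Fin n → ℝ,
      G 0 = {v} ∧
      IsVertexOf P v ∧
      (∀ x ∈ P, dotp (signedPermVec π ε α) x ≤ dotp (signedPermVec π ε α) v) ∧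
      (∀ w : Fin n → ℝ, IsVertexOf P w →
        (∀ x ∈ P, dotp (signedPermVec π ε α) x ≤ dotp (signedPermVec π ε α) w) →
        w = v) := by
  classical
  obtain ⟨⟨S, hSne, hSP⟩, hVert⟩ := hP
  have hPconv : Convex ℝ P := hSP ▸ convex_convexHull ℝ _
  have hPcomp : IsCompact P := hSP ▸ S.finite_toSet.isCompact_convexHull ℝ
  have hVsub : P.extremePoints ℝ ⊆ (S : Set (Fin n → ℝ)) := by
    rw [hSP]; exact extremePoints_convexHull_subset
  have hVfin : (P.extremePoints ℝ).Finite := S.finite_toSet.subset hVsub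
  set V : Finset (Fin n → ℝ) := hVfin.toFinset with hVdef
  have hVcoe : (V : Set (Fin n → ℝ)) = P.extremePoints ℝ := hVfin.coe_toFinset
  have hPV : P = convexHull ℝ (V : Set (Fin n → ℝ)) := by
    have hcl : IsClosed (convexHull ℝ (V : Set (Fin n → ℝ))) :=
      V.finite_toSet.isClosed_convexHull ℝ
    have h1 : closure (convexHull ℝ (V : Set (Fin n → ℝ))) = P := by
      rw [hVcoe]; exact closure_convexHull_extremePoints hPcomp hPconv
    rw [← h1, hcl.closure_eq]
  have hVP : (V : Set (Fin n → ℝ)) ⊆ P := by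
    rw [hVcoe]; exact extremePoints_subset
  have hVlat : ∀ v ∈ V, ∀ i, (∃ z : ℤ, v i = (z : ℝ)) ∧ 0 ≤ v i ∧ v i ≤ (k : ℝ) := by
    intro v hv
    apply hVert
    rw [IsVertexOf, ← hVcoe]
    exact_mod_cast hv
  have hVne : V.Nonempty := by
    rcases hSne with ⟨s0, hs0⟩
    have hs0P : s0 ∈ P := by
      rw [hSP]; exact subset_convexHull ℝ _ hs0
    by_contra h
    rw [Finset.not_nonempty_iff_eq_empty] at h
    rw [hPV, h] at hs0P
    simp at hs0P
  have hk0 : (0:ℝ) ≤ (k : ℝ) := Nat.cast_nonneg k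
  have hα0 : (0:ℝ) < α := by linarith
  -- the truncated weight vectors
  set c : ℕ → (Fin n → ℝ) :=
    fun i j => if i ≤ (π j : ℕ) then ε j * α ^ ((π j : ℕ) + 1) else 0 with hcdef
  have hc0 : c 0 = signedPermVec π ε α := by
    funext j
    simp [hcdef, signedPermVec]
  have hdotp : ∀ (i : ℕ) (x : Fin n → ℝ), dotp (c i) x
      = ∑ t ∈ univ.filter (fun t : Fin n => i ≤ (t : ℕ)),
          α ^ ((t : ℕ) + 1) * (ε (π.symm t) * x (π.symm t)) := by
    intro i x
    rw [dotp, ← Equiv.sum_comp π.symm (fun j => c i j * x j), Finset.sum_filter]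
    apply Finset.sum_congr rfl
    intro t _
    simp only [hcdef, Equiv.apply_symm_apply]
    split_ifs <;> ring
  have hdiff : ∀ (i : ℕ) (u v : Fin n → ℝ), dotp (c i) v - dotp (c i) u
      = ∑ t ∈ univ.filter (fun t : Fin n => i ≤ (t : ℕ)),
          α ^ ((t : ℕ) + 1)
            * (ε (π.symm t) * v (π.symm t) - ε (π.symm t) * u (π.symm t)) := by
    intro i u v
    rw [hdotp, hdotp, ← Finset.sum_sub_distrib]
    exact Finset.sum_congr rfl fun t _ => by ring
  -- properties of difference coefficients for lattice vertices
  have hdprop : ∀ u ∈ V, ∀ v ∈ V, ∀ t : Fin n,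
      (∃ z : ℤ, ε (π.symm t) * v (π.symm t) - ε (π.symm t) * u (π.symm t) = (z : ℝ)) ∧
      |ε (π.symm t) * v (π.symm t) - ε (π.symm t) * u (π.symm t)| ≤ (k : ℝ) := by
    intro u hu v hv t
    set j := π.symm t
    obtain ⟨⟨zv, hzv⟩, hv0, hvk⟩ := hVlat v hv j
    obtain ⟨⟨zu, hzu⟩, hu0, huk⟩ := hVlat u hu j
    have habs : |v j - u j| ≤ (k : ℝ) := abs_le.2 ⟨by linarith, by linarith⟩
    have heq : ε j * v j - ε j * u j = ε j * (v j - u j) := by ring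
    rcases hε j with hε1 | hε1
    · constructor
      · exact ⟨zv - zu, by rw [heq, hε1, one_mul, hzv, hzu]; push_cast; ring⟩
      · rw [heq, hε1, one_mul]; exact habs
    · constructor
      · exact ⟨zu - zv, by rw [heq, hε1, hzv, hzu]; push_cast; ring⟩
      · rw [heq, hε1]
        rw [neg_one_mul, abs_neg]
        exact habs
  -- gap lemma
  have hgap : ∀ (i : ℕ), ∀ u ∈ V, ∀ v ∈ V,
      dotp (c (i + 1)) u < dotp (c (i + 1)) v → dotp (c i) u < dotp (c i) v := by
    intro i u hu v hv hlt
    have hpos : 0 < ∑ t ∈ univ.filter (fun t : Fin n => i + 1 ≤ (t : ℕ)),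
        α ^ ((t : ℕ) + 1)
          * (ε (π.symm t) * v (π.symm t) - ε (π.symm t) * u (π.symm t)) := by
      rw [← hdiff]; linarith
    have h := gap_step α (k : ℝ) hk0 hα
      (fun t => ε (π.symm t) * v (π.symm t) - ε (π.symm t) * u (π.symm t))
      (fun t => (hdprop u hu v hv t).1) (fun t => (hdprop u hu v hv t).2) i hpos
    rw [← hdiff] at h
    linarith
  -- argmax finsets
  set T : ℕ → Finset (Fin n → ℝ) :=
    fun i => V.filter (fun v => ∀ u ∈ V, dotp (c i) u ≤ dotp (c i) v) with hTdef
  have hTsub : ∀ i, T i ⊆ V := fun i => Finset.filter_subset _ _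
  have hTne : ∀ i, (T i).Nonempty := by
    intro i
    obtain ⟨v, hv, hmax⟩ := V.exists_max_image (dotp (c i)) hVne
    exact ⟨v, Finset.mem_filter.2 ⟨hv, hmax⟩⟩
  have hTconst : ∀ i, ∀ u ∈ T i, ∀ v ∈ T i, dotp (c i) u = dotp (c i) v := by
    intro i u hu v hv
    obtain ⟨huV, humax⟩ := Finset.mem_filter.1 hu
    obtain ⟨hvV, hvmax⟩ := Finset.mem_filter.1 hv
    exact le_antisymm (hvmax u huV) (humax v hvV)
  -- decomposition of c i
  have hdec : ∀ i : Fin n, ∀ x : Fin n → ℝ,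
      dotp (c (i : ℕ)) x = dotp (c ((i : ℕ) + 1)) x
        + α ^ ((i : ℕ) + 1) * (ε (π.symm i) * x (π.symm i)) := by
    intro i x
    rw [hdotp, hdotp]
    have hins : univ.filter (fun t : Fin n => (i : ℕ) ≤ (t : ℕ))
        = insert i (univ.filter (fun t : Fin n => (i : ℕ) + 1 ≤ (t : ℕ))) := by
      ext t
      simp only [Finset.mem_filter, Finset.mem_univ, true_and, Finset.mem_insert, Fin.ext_iff]
      omega
    have hni : i ∉ univ.filter (fun t : Fin n => (i : ℕ) + 1 ≤ (t : ℕ)) := by simp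
    rw [hins, Finset.sum_insert hni]
    ring
  -- the step identity for the argmax finsets
  have hTstep : ∀ i : Fin n,
      (T ((i : ℕ) + 1)).filter
        (fun t => ∀ u ∈ T ((i : ℕ) + 1),
          ε (π.symm i) * u (π.symm i) ≤ ε (π.symm i) * t (π.symm i))
      = T (i : ℕ) := by
    intro i
    have hpow : (0:ℝ) < α ^ ((i : ℕ) + 1) := pow_pos hα0 _
    ext t
    simp only [Finset.mem_filter]
    constructor
    · rintro ⟨ht1, hgmax⟩
      obtain ⟨htV, htmax⟩ := Finset.mem_filter.1 ht1
      refine Finset.mem_filter.2 ⟨htV, ?_⟩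
      intro u hu
      by_cases huT : u ∈ T ((i : ℕ) + 1)
      · have he : dotp (c ((i : ℕ) + 1)) u = dotp (c ((i : ℕ) + 1)) t :=
          hTconst _ u huT t ht1
        have hg := hgmax u huT
        rw [hdec i u, hdec i t, he]
        nlinarith
      · have huT' : ¬ (∀ w ∈ V, dotp (c ((i : ℕ) + 1)) w ≤ dotp (c ((i : ℕ) + 1)) u) := by
          intro hmax
          exact huT (Finset.mem_filter.2 ⟨hu, hmax⟩)
        push_neg at huT'
        obtain ⟨w, hw, hlt⟩ := huT'
        have h2 : dotp (c ((i : ℕ) + 1)) u < dotp (c ((i : ℕ) + 1)) t :=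
          lt_of_lt_of_le hlt (htmax w hw)
        exact le_of_lt (hgap (i : ℕ) u hu t htV h2)
    · intro ht
      obtain ⟨htV, htmax⟩ := Finset.mem_filter.1 ht
      have htT1 : t ∈ T ((i : ℕ) + 1) := by
        refine Finset.mem_filter.2 ⟨htV, ?_⟩
        intro u hu
        by_contra hc'
        push_neg at hc'
        have := hgap (i : ℕ) t htV u hu hc'
        exact absurd (htmax u hu) (not_le.2 this)
      refine ⟨htT1, ?_⟩
      intro u huT
      have h1 : dotp (c (i : ℕ)) u ≤ dotp (c (i : ℕ)) t := htmax u (hTsub _ huT)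
      have he : dotp (c ((i : ℕ) + 1)) u = dotp (c ((i : ℕ) + 1)) t :=
        hTconst _ u huT t htT1
      rw [hdec i u, hdec i t, he] at h1
      have h2 : α ^ ((i : ℕ) + 1) * (ε (π.symm i) * u (π.symm i))
          ≤ α ^ ((i : ℕ) + 1) * (ε (π.symm i) * t (π.symm i)) := by linarith
      exact le_of_mul_le_mul_left h2 hpow
  -- T n = V
  have hTn : T n = V := by
    have hcn : c n = 0 := by
      funext j
      have : ¬ (n ≤ (π j : ℕ)) := by
        have := (π j).isLt
        omega
      simp [hcdef, this]
    ext v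
    simp only [hTdef, Finset.mem_filter, hcn]
    constructor
    · exact fun h => h.1
    · intro hv
      refine ⟨hv, fun u _ => ?_⟩
      simp [dotp]
  -- the main downward induction
  have hinv : ∀ j : ℕ, j ≤ n →
      G (n - j) = convexHull ℝ ((T (n - j) : Finset (Fin n → ℝ)) : Set (Fin n → ℝ)) := by
    intro j
    induction j with
    | zero =>
      intro _
      simp only [Nat.sub_zero]
      rw [hGtop, hTn, hPV]
    | succ j ih =>
      intro hj
      have hj' : j ≤ n := by omega
      have ihh := ih hj'
      have hilt : n - (j + 1) < n := by omega
      set i : Fin n := ⟨n - (j + 1), hilt⟩ with hidef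
      have hii : (i : ℕ) + 1 = n - j := by
        simp only [hidef]
        omega
      have hstep := hGstep i
      have hic : (i : ℕ) = n - (j + 1) := rfl
      rw [hic, hii] at hstep
      rw [hstep, ihh, face_convexHull (T (n - j)) (ε (π.symm i)) (π.symm i)]
      congr 1
      have hT := hTstep i
      rw [hii, hic] at hT
      rw [hT]
  have hG0 : G 0 = convexHull ℝ ((T 0 : Finset (Fin n → ℝ)) : Set (Fin n → ℝ)) := by
    have := hinv n le_rfl
    simpa using this
  obtain ⟨v, hvT⟩ := hTne 0
  have hvV : v ∈ V := hTsub 0 hvT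
  have hvmaxV : ∀ u ∈ V, dotp (c 0) u ≤ dotp (c 0) v := (Finset.mem_filter.1 hvT).2
  -- T 0 is a singleton
  have hsingle : T 0 = {v} := by
    apply Finset.eq_singleton_iff_unique_mem.2
    refine ⟨hvT, ?_⟩
    intro u huT
    have huV : u ∈ V := hTsub 0 huT
    have heq : dotp (c 0) u = dotp (c 0) v := hTconst 0 u huT v hvT
    have h0 : ∑ t ∈ univ.filter (fun t : Fin n => 0 ≤ (t : ℕ)),
        α ^ ((t : ℕ) + 1)
          * (ε (π.symm t) * v (π.symm t) - ε (π.symm t) * u (π.symm t)) = 0 := by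
      rw [← hdiff]
      linarith
    have hz := all_zero α (k : ℝ) hk0 hα
      (fun t => ε (π.symm t) * v (π.symm t) - ε (π.symm t) * u (π.symm t))
      (fun t => (hdprop u huV v hvV t).1) (fun t => (hdprop u huV v hvV t).2) h0
    funext j
    have := hz (π j)
    simp only [Equiv.symm_apply_apply] at this
    rcases hε j with h1 | h1
    · rw [h1] at this; linarith
    · rw [h1] at this; linarith
  rw [hsingle] at hG0
  refine ⟨v, ?_, ?_, ?_, ?_⟩
  · rw [hG0]
    simp
  · rw [IsVertexOf, ← hVcoe]
    exact_mod_cast hvV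
  · intro x hx
    rw [← hc0]
    rw [hPV] at hx
    exact le_of_mem_convexHull (dotp_isLinear (c 0)) hvmaxV hx
  · intro w hw hwmax
    have hwV : w ∈ V := by
      have hw' : w ∈ P.extremePoints ℝ := hw
      rw [hVdef, Set.Finite.mem_toFinset]
      exact hw' 
    have hwT : w ∈ T 0 := by
      refine Finset.mem_filter.2 ⟨hwV, ?_⟩
      intro u hu
      rw [← hc0] at hwmax
      exact hwmax u (hVP hu)
    rw [hsingle] at hwT
    exact Finset.mem_singleton.1 hwT
end

section
/- Let P ⊆ ℝ^n be a polytope with vertex set V, and let c, f ∈ ℝ^n. Let F = {x ∈ P : fᵀx = min_{y ∈ P} fᵀy} be the f-minimal face of P, and let v be a vertex of P that maximizes x ↦ cᵀx over F. Then there exists a c-monotone path from v to a vertex maximizing x ↦ cᵀx over P whose length is at most |{fᵀw : w ∈ V}| − 1, i.e., at most one less than the number of distinct values that fᵀ takes on the vertices of P. -/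
open Set Finset

section Aux
variable {n : ℕ}

/-- The dot product as a continuous linear map. -/
noncomputable def dclm (c : Fin n → ℝ) : (Fin n → ℝ) →L[ℝ] ℝ :=
  LinearMap.toContinuousLinearMap (∑ i, c i • (LinearMap.proj i : (Fin n → ℝ) →ₗ[ℝ] ℝ))

@[simp] lemma dclm_apply (c x : Fin n → ℝ) : dclm c x = dotp c x := by
  simp [dclm, dotp, LinearMap.sum_apply, LinearMap.smul_apply, smul_eq_mul]

lemma hull_le_sup' (U : Finset (Fin n → ℝ)) (hU : U.Nonempty) (l : (Fin n → ℝ) →L[ℝ] ℝ)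
    {x : Fin n → ℝ} (hx : x ∈ convexHull ℝ (U : Set (Fin n → ℝ))) : l x ≤ U.sup' hU l := by
  have h : convexHull ℝ (U : Set (Fin n → ℝ)) ⊆ {y | l y ≤ U.sup' hU l} :=
    convexHull_min (fun u hu => Finset.le_sup' l hu)
      (convex_halfSpace_le ⟨l.map_add, l.map_smul⟩ _)
  exact h hx

lemma face_hull_eq (U : Finset (Fin n → ℝ)) (hU : U.Nonempty) (l : (Fin n → ℝ) →L[ℝ] ℝ) :
    {x ∈ convexHull ℝ (U : Set (Fin n → ℝ)) |
        ∀ y ∈ convexHull ℝ (U : Set (Fin n → ℝ)), l y ≤ l x}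
      = convexHull ℝ ((U.filter (fun u => l u = U.sup' hU l) : Finset (Fin n → ℝ)) :
          Set (Fin n → ℝ)) := by
  set M := U.sup' hU l with hM
  obtain ⟨u₀, hu₀U, hu₀⟩ := Finset.exists_mem_eq_sup' hU l
  apply Set.Subset.antisymm
  · rintro x ⟨hxP, hxmax⟩
    have hxM : l x = M := by
      have h1 := hxmax u₀ (subset_convexHull ℝ _ (by exact_mod_cast hu₀U))
      have h2 := hull_le_sup' U hU l hxP
      rw [hM, hu₀]; rw [hu₀] at h2; exact le_antisymm h2 h1
    rw [Finset.convexHull_eq] at hxP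
    obtain ⟨w, hw0, hw1, hcm⟩ := hxP
    have hxsum : x = ∑ y ∈ U, w y • y := by
      rw [← hcm, Finset.centerMass_eq_of_sum_1 _ _ hw1]; rfl
    have hlx : l x = ∑ y ∈ U, w y * l y := by
      rw [hxsum, map_sum]; simp [smul_eq_mul]
    have hzero : ∀ y ∈ U, w y * (M - l y) = 0 := by
      rw [← Finset.sum_eq_zero_iff_of_nonneg]
      · have : ∑ y ∈ U, w y * (M - l y) = M * (∑ y ∈ U, w y) - ∑ y ∈ U, w y * l y := by
          rw [Finset.mul_sum, ← Finset.sum_sub_distrib]; congr 1; ext y; ring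
        rw [this, hw1, ← hlx, hxM]; ring
      · intro y hy
        exact mul_nonneg (hw0 y hy) (sub_nonneg.2 (Finset.le_sup' l hy))
    have hsupp : ∀ y ∈ U, w y ≠ 0 → l y = M := by
      intro y hy hwy
      have := hzero y hy
      rcases mul_eq_zero.1 this with h | h
      · exact absurd h hwy
      · linarith [sub_eq_zero.1 h]
    set U₁ := U.filter (fun u => l u = M) with hU₁
    have hsum1 : ∑ y ∈ U₁, w y = 1 := by
      rw [← hw1]
      exact Finset.sum_filter_of_ne (fun y hy hne => hsupp y hy hne)
    have hsumv : ∑ y ∈ U₁, w y • y = ∑ y ∈ U, w y • y := by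
      refine Finset.sum_filter_of_ne (fun y hy hne => hsupp y hy ?_)
      intro h0; apply hne; rw [h0, zero_smul]
    have hmem := Finset.centerMass_mem_convexHull (t := U₁) (w := w) (z := id)
      (fun i hi => hw0 i (Finset.mem_filter.1 hi).1) (by rw [hsum1]; norm_num)
      (fun i hi => Finset.mem_coe.2 hi)
    have : U₁.centerMass w id = x := by
      rw [Finset.centerMass_eq_of_sum_1 _ _ hsum1, hxsum, ← hsumv]; rfl
    rwa [this] at hmem
  · intro z hz
    have hzU : z ∈ convexHull ℝ (U : Set (Fin n → ℝ)) :=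
      convexHull_mono (by exact_mod_cast Finset.filter_subset _ U) hz
    have hle : l z ≤ M := hull_le_sup' U hU l hzU
    have hge : M ≤ l z := by
      have h : convexHull ℝ ((U.filter (fun u => l u = M) : Finset (Fin n → ℝ)) :
          Set (Fin n → ℝ)) ⊆ {y | M ≤ l y} :=
        convexHull_min (fun u hu => by
          rcases Finset.mem_coe.1 hu with hu'
          exact le_of_eq (Finset.mem_filter.1 hu').2.symm)
          (convex_halfSpace_ge ⟨l.map_add, l.map_smul⟩ _)
      exact h hz
    exact ⟨hzU, fun y hy => by rw [le_antisymm hle hge]; exact hull_le_sup' U hU l hy⟩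

end Aux

section S2
variable {n : ℕ}

lemma extreme_restrict {P Q : Set (Fin n → ℝ)} (hQP : Q ⊆ P) {x : Fin n → ℝ}
    (hx : x ∈ Set.extremePoints ℝ P) (hxQ : x ∈ Q) : x ∈ Set.extremePoints ℝ Q :=
  ⟨hxQ, fun x₁ h₁ x₂ h₂ hseg => hx.2 (hQP h₁) (hQP h₂) hseg⟩

lemma vertex_notin_erase (U : Finset (Fin n → ℝ)) {x : Fin n → ℝ}
    (hx : x ∈ Set.extremePoints ℝ (convexHull ℝ (U : Set (Fin n → ℝ)))) :
    x ∉ convexHull ℝ ((U.erase x : Finset (Fin n → ℝ)) : Set (Fin n → ℝ)) := by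
  intro hmem
  have hsub : convexHull ℝ ((U.erase x : Finset (Fin n → ℝ)) : Set (Fin n → ℝ)) ⊆
      convexHull ℝ (U : Set (Fin n → ℝ)) :=
    convexHull_mono (by exact_mod_cast Finset.erase_subset x U)
  have h1 := extreme_restrict hsub hx hmem
  have h2 := extremePoints_convexHull_subset h1
  simp at h2

lemma exists_exposing (U : Finset (Fin n → ℝ)) {x : Fin n → ℝ}
    (hx : x ∈ Set.extremePoints ℝ (convexHull ℝ (U : Set (Fin n → ℝ)))) :
    ∃ d : (Fin n → ℝ) →L[ℝ] ℝ, ∀ u ∈ U, u ≠ x → d u < d x := by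
  have hclosed : IsClosed (convexHull ℝ ((U.erase x : Finset (Fin n → ℝ)) : Set (Fin n → ℝ))) :=
    ((U.erase x).finite_toSet.isCompact_convexHull ℝ).isClosed
  obtain ⟨d, r, hlt, hgt⟩ := geometric_hahn_banach_closed_point
    (convex_convexHull ℝ _) hclosed (vertex_notin_erase U hx)
  refine ⟨d, fun u hu hne => ?_⟩
  have : u ∈ convexHull ℝ ((U.erase x : Finset (Fin n → ℝ)) : Set (Fin n → ℝ)) :=
    subset_convexHull ℝ _ (by exact_mod_cast Finset.mem_erase.2 ⟨hne, hu⟩)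
  exact lt_trans (hlt u this) hgt

lemma dim_lt (U : Finset (Fin n → ℝ)) (h : (Fin n → ℝ) →L[ℝ] ℝ) {x : Fin n → ℝ}
    (hxU : x ∈ U) (hne : ∃ u ∈ U, h u ≠ h x) :
    Module.finrank ℝ (vectorSpan ℝ ((U.filter (fun u => h u = h x) : Finset (Fin n → ℝ)) :
        Set (Fin n → ℝ))) < Module.finrank ℝ (vectorSpan ℝ (U : Set (Fin n → ℝ))) := by
  obtain ⟨u₀, hu₀U, hu₀⟩ := hne
  set U₁ := U.filter (fun u => h u = h x) with hU₁
  have hle : vectorSpan ℝ (U₁ : Set (Fin n → ℝ)) ≤ vectorSpan ℝ (U : Set (Fin n → ℝ)) :=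
    vectorSpan_mono ℝ (by exact_mod_cast Finset.filter_subset _ U)
  have hker : vectorSpan ℝ (U₁ : Set (Fin n → ℝ)) ≤ LinearMap.ker (h : (Fin n → ℝ) →ₗ[ℝ] ℝ) := by
    rw [vectorSpan_def, Submodule.span_le]
    rintro w ⟨a, ha, b, hb, rfl⟩
    have ha' := (Finset.mem_filter.1 (Finset.mem_coe.1 ha)).2
    have hb' := (Finset.mem_filter.1 (Finset.mem_coe.1 hb)).2
    simp only [SetLike.mem_coe, LinearMap.mem_ker]
    show h (a - b) = 0
    rw [map_sub, ha', hb', sub_self]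
  have hw : (u₀ - x) ∈ vectorSpan ℝ (U : Set (Fin n → ℝ)) := by
    exact vsub_mem_vectorSpan ℝ (Finset.mem_coe.2 hu₀U) (Finset.mem_coe.2 hxU)
  have hwn : (u₀ - x) ∉ vectorSpan ℝ (U₁ : Set (Fin n → ℝ)) := by
    intro hmem
    have := hker hmem
    simp only [SetLike.mem_coe, LinearMap.mem_ker] at this
    have : h (u₀ - x) = 0 := this
    rw [map_sub, sub_eq_zero] at this
    exact hu₀ this
  have hlt : vectorSpan ℝ (U₁ : Set (Fin n → ℝ)) < vectorSpan ℝ (U : Set (Fin n → ℝ)) :=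
    lt_of_le_of_ne hle (fun hEq => hwn (hEq ▸ hw))
  exact Submodule.finrank_lt_finrank_of_lt hlt


/-- Transitivity of exposedness for polytopes. -/
lemma exposed_trans (V : Finset (Fin n → ℝ)) (hV : V.Nonempty) {Q A : Set (Fin n → ℝ)}
    (hQ : IsExposed ℝ (convexHull ℝ (V : Set (Fin n → ℝ))) Q)
    (hA : IsExposed ℝ Q A) (hAne : A.Nonempty) :
    IsExposed ℝ (convexHull ℝ (V : Set (Fin n → ℝ))) A := by
  classical
  set P := convexHull ℝ (V : Set (Fin n → ℝ)) with hP
  have hQne : Q.Nonempty := hAne.mono hA.subset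
  obtain ⟨h, hQeq⟩ := hQ hQne
  set MV := V.sup' hV h with hMV
  set W := V.filter (fun u => h u = MV) with hWdef
  have hQW : Q = convexHull ℝ (W : Set (Fin n → ℝ)) := by
    rw [hQeq]; exact face_hull_eq V hV h
  have hWne : W.Nonempty := by
    obtain ⟨u₀, hu₀U, hu₀⟩ := Finset.exists_mem_eq_sup' hV h
    exact ⟨u₀, Finset.mem_filter.2 ⟨hu₀U, hu₀.symm⟩⟩
  obtain ⟨l, hAeq⟩ := hA hAne
  set MW := W.sup' hWne l with hMW
  set T := W.filter (fun u => l u = MW) with hTdef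
  have hAT : A = convexHull ℝ (T : Set (Fin n → ℝ)) := by
    rw [hAeq, hQW]; exact face_hull_eq W hWne l
  by_cases hall : ∀ u ∈ V, h u = MV
  · -- W = V, so Q = P
    have hWV : W = V := by
      apply Finset.filter_true_of_mem hall
    rw [hQW, hWV, ← hP] at hA
    exact hA
  · push_neg at hall
    obtain ⟨ubad, hubadV, hubad⟩ := hall
    set Vbad := V.filter (fun u => h u ≠ MV) with hVbad
    have hVbadne : Vbad.Nonempty := ⟨ubad, Finset.mem_filter.2 ⟨hubadV, hubad⟩⟩
    set Mbad := Vbad.sup' hVbadne h with hMbad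
    have hMbadlt : Mbad < MV := by
      rw [hMbad]
      apply Finset.sup'_lt_iff hVbadne |>.2
      intro u hu
      have h1 := Finset.le_sup' h (Finset.mem_filter.1 hu).1
      have h2 := (Finset.mem_filter.1 hu).2
      exact lt_of_le_of_ne h1 h2
    set δ := MV - Mbad with hδ
    have hδpos : 0 < δ := by rw [hδ]; linarith
    set C := V.sup' hV l - V.inf' hV l with hC
    have hCnn : 0 ≤ C := by
      rw [hC]; obtain ⟨u, hu⟩ := hV
      have := Finset.inf'_le l hu
      have := Finset.le_sup' l hu
      linarith
    set N := (C + 1) / δ with hN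
    have hNpos : 0 < N := div_pos (by linarith) hδpos
    set l' : (Fin n → ℝ) →L[ℝ] ℝ := N • h + l with hl'
    have hl'app : ∀ z, l' z = N * h z + l z := by
      intro z; simp [hl', smul_eq_mul]
    have hMWlb : V.inf' hV l ≤ MW := by
      obtain ⟨t0, ht0W, ht0⟩ := Finset.exists_mem_eq_sup' hWne l
      rw [hMW, ht0]
      exact Finset.inf'_le l (Finset.mem_filter.1 ht0W).1
    -- key bounds
    have hub : ∀ u ∈ V, l' u ≤ N * MV + MW ∧ (l' u = N * MV + MW ↔ u ∈ T) := by
      intro u huV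
      by_cases huW : u ∈ W
      · have hhu : h u = MV := (Finset.mem_filter.1 huW).2
        have hlu : l u ≤ MW := Finset.le_sup' l huW
        constructor
        · rw [hl'app, hhu]; linarith
        · constructor
          · intro hEq
            rw [hl'app, hhu] at hEq
            have : l u = MW := by linarith
            exact Finset.mem_filter.2 ⟨huW, this⟩
          · intro hT
            have : l u = MW := (Finset.mem_filter.1 hT).2
            rw [hl'app, hhu, this]
      · have hbadmem : u ∈ Vbad := Finset.mem_filter.2 ⟨huV, by
          intro hEq; exact huW (Finset.mem_filter.2 ⟨huV, hEq⟩)⟩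
        have hhu : h u ≤ Mbad := Finset.le_sup' h hbadmem
        have hlu : l u ≤ V.sup' hV l := Finset.le_sup' l huV
        have hstrict : l' u < N * MV + MW := by
          rw [hl'app]
          have h1 : N * h u ≤ N * Mbad :=
            mul_le_mul_of_nonneg_left hhu (le_of_lt hNpos)
          have h2 : N * δ = C + 1 := div_mul_cancel₀ _ (ne_of_gt hδpos)
          have h6 : N * Mbad = N * MV - (C + 1) := by rw [← h2, hδ]; ring
          have h3 : l u ≤ V.inf' hV l + C := by rw [hC]; linarith
          have := hMWlb
          linarith
        constructor
        · exact le_of_lt hstrict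
        · constructor
          · intro hEq; exact absurd hEq (ne_of_lt hstrict)
          · intro hT
            exact absurd (Finset.filter_subset _ W hT) huW
    have hTne : T.Nonempty := by
      obtain ⟨t0, ht0W, ht0⟩ := Finset.exists_mem_eq_sup' hWne l
      exact ⟨t0, Finset.mem_filter.2 ⟨ht0W, ht0.symm⟩⟩
    have hsupl' : V.sup' hV l' = N * MV + MW := by
      apply le_antisymm
      · exact Finset.sup'_le hV l' (fun u hu => (hub u hu).1)
      · obtain ⟨t0, ht0T⟩ := hTne
        have ht0W : t0 ∈ W := Finset.filter_subset _ W ht0T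
        have ht0V : t0 ∈ V := Finset.filter_subset _ V ht0W
        have heq := (hub t0 ht0V).2.2 ht0T
        rw [← heq]
        exact Finset.le_sup' l' ht0V
    have hfilter : V.filter (fun u => l' u = V.sup' hV l') = T := by
      ext u
      simp only [Finset.mem_filter]
      constructor
      · rintro ⟨huV, hEq⟩
        rw [hsupl'] at hEq
        exact (hub u huV).2.1 hEq
      · intro hT
        have huW : u ∈ W := Finset.filter_subset _ W hT
        have huV : u ∈ V := Finset.filter_subset _ V huW
        exact ⟨huV, by rw [hsupl']; exact (hub u huV).2.2 hT⟩
    intro _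
    refine ⟨l', ?_⟩
    calc A = convexHull ℝ ((V.filter (fun u => l' u = V.sup' hV l') : Finset (Fin n → ℝ)) :
            Set (Fin n → ℝ)) := by rw [hAT, hfilter]
      _ = {x ∈ P | ∀ y ∈ P, l' y ≤ l' x} := by rw [hP]; exact (face_hull_eq V hV l').symm

/-- The whole polytope is an exposed subset of itself. -/
lemma isExposed_self (A : Set (Fin n → ℝ)) : IsExposed ℝ A A := by
  intro _
  refine ⟨0, ?_⟩
  ext x; simp

/-- An argmax sub-face of an exposed face of a polytope is exposed in the polytope. -/
lemma exposed_filter (V : Finset (Fin n → ℝ)) (hV : V.Nonempty)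
    (U : Finset (Fin n → ℝ)) (hUne : U.Nonempty)
    (hexp : IsExposed ℝ (convexHull ℝ (V : Set (Fin n → ℝ))) (convexHull ℝ (U : Set (Fin n → ℝ))))
    (h : (Fin n → ℝ) →L[ℝ] ℝ) {x : Fin n → ℝ} (hxU : x ∈ U)
    (hmax : ∀ u ∈ U, h u ≤ h x) :
    IsExposed ℝ (convexHull ℝ (V : Set (Fin n → ℝ)))
      (convexHull ℝ ((U.filter (fun u => h u = h x) : Finset (Fin n → ℝ)) : Set (Fin n → ℝ))) := by
  have hsup : U.sup' hUne h = h x :=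
    le_antisymm (Finset.sup'_le hUne h hmax) (Finset.le_sup' h hxU)
  have hfe : U.filter (fun u => h u = h x) = U.filter (fun u => h u = U.sup' hUne h) := by
    rw [hsup]
  have hsub : IsExposed ℝ (convexHull ℝ (U : Set (Fin n → ℝ)))
      (convexHull ℝ ((U.filter (fun u => h u = h x) : Finset (Fin n → ℝ)) : Set (Fin n → ℝ))) := by
    rw [hfe, ← face_hull_eq U hUne h]
    exact ContinuousLinearMap.toExposed.isExposed
  apply exposed_trans V hV hexp hsub
  refine ⟨x, subset_convexHull ℝ _ ?_⟩
  have hxf : x ∈ U.filter (fun u => h u = h x) := Finset.mem_filter.2 ⟨hxU, rfl⟩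
  exact_mod_cast hxf
end S2

section S3
variable {n : ℕ}

/-- Every vertex of an exposed sub-polytope with ≥ 2 vertices has a neighbor within it,
joined by an edge exposed in the big polytope. -/
lemma neigh (V : Finset (Fin n → ℝ)) (hV : V.Nonempty) :
    ∀ k : ℕ, ∀ U : Finset (Fin n → ℝ),
    Module.finrank ℝ (vectorSpan ℝ (U : Set (Fin n → ℝ))) < k →
    (U : Set (Fin n → ℝ)) ⊆ Set.extremePoints ℝ (convexHull ℝ (V : Set (Fin n → ℝ))) →
    IsExposed ℝ (convexHull ℝ (V : Set (Fin n → ℝ))) (convexHull ℝ (U : Set (Fin n → ℝ))) →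
    ∀ x ∈ U, (∃ u ∈ U, u ≠ x) →
    ∃ y ∈ U, y ≠ x ∧
      IsExposed ℝ (convexHull ℝ (V : Set (Fin n → ℝ))) (segment ℝ x y) := by
  intro k
  induction k with
  | zero => intro U hdim; omega
  | succ k IH =>
    intro U hdim hUV hexp x hxU hex2
    obtain ⟨u₁, hu₁U, hu₁x⟩ := hex2
    classical
    set P := convexHull ℝ (V : Set (Fin n → ℝ)) with hP
    have hUP : convexHull ℝ (U : Set (Fin n → ℝ)) ⊆ P := hexp.subset
    have hUne : U.Nonempty := ⟨x, hxU⟩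
    have hxex : x ∈ Set.extremePoints ℝ (convexHull ℝ (U : Set (Fin n → ℝ))) :=
      extreme_restrict hUP (hUV (Finset.mem_coe.2 hxU))
        (subset_convexHull ℝ _ (Finset.mem_coe.2 hxU))
    obtain ⟨d, hd⟩ := exists_exposing U hxex
    by_cases haff : ∃ i : Fin n, ∀ α β : ℝ, ∃ u ∈ U, u i ≠ α * d u + β
    · -- recurse to a proper face containing x
      obtain ⟨i, hi⟩ := haff
      set e : (Fin n → ℝ) →L[ℝ] ℝ := ContinuousLinearMap.proj i with he
      have heapp : ∀ z : Fin n → ℝ, e z = z i := fun z => rfl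
      set U' := U.erase x with hU'
      have hU'ne : U'.Nonempty := ⟨u₁, Finset.mem_erase.2 ⟨hu₁x, hu₁U⟩⟩
      have hdpos : ∀ u ∈ U', 0 < d x - d u := by
        intro u hu
        have := hd u (Finset.mem_erase.1 hu).2 (Finset.mem_erase.1 hu).1
        linarith
      set r : (Fin n → ℝ) → ℝ := fun u => (e u - e x) / (d x - d u) with hr
      set lam := U'.sup' hU'ne r with hlam
      set h : (Fin n → ℝ) →L[ℝ] ℝ := e + lam • d with hh
      have happ : ∀ z, h z = e z + lam * d z := by
        intro z; simp [hh, smul_eq_mul]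
      have hmax : ∀ u ∈ U, h u ≤ h x := by
        intro u huU
        by_cases hux : u = x
        · rw [hux]
        · have huU' : u ∈ U' := Finset.mem_erase.2 ⟨hux, huU⟩
          have h1 : r u ≤ lam := Finset.le_sup' r huU'
          have h2 := hdpos u huU'
          rw [happ, happ]
          have h3 := (div_le_iff₀ h2).1 h1
          nlinarith
      obtain ⟨u₂, hu₂U', hu₂⟩ := Finset.exists_mem_eq_sup' hU'ne r
      have hu₂U : u₂ ∈ U := (Finset.mem_erase.1 hu₂U').2
      have hu₂x : u₂ ≠ x := (Finset.mem_erase.1 hu₂U').1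
      have hu₂tie : h u₂ = h x := by
        have h2 := hdpos u₂ hu₂U'
        have h5 : r u₂ * (d x - d u₂) = e u₂ - e x := div_mul_cancel₀ _ (ne_of_gt h2)
        rw [happ, happ]
        have hlam2 : lam = r u₂ := hu₂
        rw [hlam2]
        linear_combination -h5
      have hproper : ∃ u ∈ U, h u ≠ h x := by
        obtain ⟨u, huU, hune⟩ := hi (-lam) (e x + lam * d x)
        refine ⟨u, huU, fun hEq => hune ?_⟩
        rw [happ, happ] at hEq
        rw [← heapp u]
        linarith
      set U₂ := U.filter (fun u => h u = h x) with hU₂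
      have hxU₂ : x ∈ U₂ := Finset.mem_filter.2 ⟨hxU, rfl⟩
      have hu₂U₂ : u₂ ∈ U₂ := Finset.mem_filter.2 ⟨hu₂U, hu₂tie⟩
      have hdim₂ : Module.finrank ℝ (vectorSpan ℝ (U₂ : Set (Fin n → ℝ))) < k :=
        lt_of_lt_of_le (dim_lt U h hxU hproper) (Nat.lt_succ_iff.1 hdim)
      have hexp₂ := exposed_filter V hV U hUne hexp h hxU hmax
      have hUV₂ : (U₂ : Set (Fin n → ℝ)) ⊆ Set.extremePoints ℝ P := by
        intro z hz
        exact hUV (Finset.mem_coe.2 (Finset.filter_subset _ U (Finset.mem_coe.1 hz)))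
      obtain ⟨y, hyU₂, hyx, hseg⟩ := IH U₂ hdim₂ hUV₂ hexp₂ x hxU₂ ⟨u₂, hu₂U₂, hu₂x⟩
      exact ⟨y, Finset.filter_subset _ U hyU₂, hyx, hseg⟩
    · -- U is contained in a line; it must be a two-point set and conv U a segment
      push_neg at haff
      choose A B hAB using haff
      have hrep : ∀ u ∈ U, ∀ j, u j = A j * d u + B j := by
        intro u hu j; exact hAB j u hu
      have hinj : ∀ u ∈ U, ∀ u' ∈ U, d u = d u' → u = u' := by
        intro u hu u' hu' hdd
        funext j
        rw [hrep u hu j, hrep u' hu' j, hdd]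
      have hcard : U.card ≤ 2 := by
        by_contra hc
        push_neg at hc
        obtain ⟨a, haU, ha⟩ := U.exists_min_image (fun u => d u) hUne
        obtain ⟨b, hbU, hb⟩ := U.exists_max_image (fun u => d u) hUne
        have hab2 : ({a, b} : Finset (Fin n → ℝ)).card ≤ 2 :=
          (Finset.card_insert_le _ _).trans (by simp)
        have hsd : (U \ ({a, b} : Finset (Fin n → ℝ))).Nonempty := by
          rw [← Finset.card_pos]
          have := Finset.le_card_sdiff ({a, b} : Finset (Fin n → ℝ)) U
          omega
        obtain ⟨u, husd⟩ := hsd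
        obtain ⟨huU, hu_nab⟩ := Finset.mem_sdiff.1 husd
        have hua : u ≠ a := fun hEq => hu_nab (by rw [hEq]; exact Finset.mem_insert_self _ _)
        have hub : u ≠ b := fun hEq => hu_nab (by
          rw [hEq]; exact Finset.mem_insert_of_mem (Finset.mem_singleton_self _))
        have hda : d a < d u :=
          lt_of_le_of_ne (ha u huU) (fun hEq => hua ((hinj a haU u huU hEq).symm))
        have hdb : d u < d b :=
          lt_of_le_of_ne (hb u huU) (fun hEq => hub (hinj u huU b hbU hEq))
        have hden : (0:ℝ) < d b - d a := by linarith
        set t := (d u - d a) / (d b - d a) with ht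
        have ht0 : 0 < t := div_pos (by linarith) hden
        have ht1 : t < 1 := (div_lt_one hden).2 (by linarith)
        have h5 : t * (d b - d a) = d u - d a := div_mul_cancel₀ _ (ne_of_gt hden)
        have hkey : (1 - t) * d a + t * d b = d u := by linear_combination h5
        have hmem : u ∈ openSegment ℝ a b := by
          refine ⟨1 - t, t, by linarith, ht0, by ring, ?_⟩
          funext j
          have haj := hrep a haU j
          have hbj := hrep b hbU j
          have huj := hrep u huU j
          simp only [Pi.add_apply, Pi.smul_apply, smul_eq_mul]
          rw [haj, hbj, huj]
          linear_combination (A j) * hkey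
        have huex : u ∈ Set.extremePoints ℝ (convexHull ℝ (U : Set (Fin n → ℝ))) :=
          extreme_restrict hUP (hUV (Finset.mem_coe.2 huU))
            (subset_convexHull ℝ _ (Finset.mem_coe.2 huU))
        have := (huex.2 (subset_convexHull ℝ _ (Finset.mem_coe.2 haU))
          (subset_convexHull ℝ _ (Finset.mem_coe.2 hbU)) hmem)
        exact hua this.symm
      have hUeq : ({x, u₁} : Finset (Fin n → ℝ)) = U := by
        apply Finset.eq_of_subset_of_card_le
        · intro z hz
          rcases Finset.mem_insert.1 hz with h | h
          · rw [h]; exact hxU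
          · rw [Finset.mem_singleton.1 h]; exact hu₁U
        · have h2 : ({x, u₁} : Finset (Fin n → ℝ)).card = 2 := by
            rw [Finset.card_insert_of_notMem (by simp [Ne.symm hu₁x]), Finset.card_singleton]
          omega
      have hseg : convexHull ℝ (U : Set (Fin n → ℝ)) = segment ℝ x u₁ := by
        rw [← hUeq]
        push_cast
        rw [convexHull_pair]
      exact ⟨u₁, hu₁U, hu₁x, by rw [← hseg]; exact hexp⟩
end S3

section S4
variable {n : ℕ}

/-- A vertex of an exposed sub-polytope that is not optimal for `g` has a `g`-improving
neighbor within it. -/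
lemma core (V : Finset (Fin n → ℝ)) (hV : V.Nonempty) :
    ∀ k : ℕ, ∀ U : Finset (Fin n → ℝ),
    Module.finrank ℝ (vectorSpan ℝ (U : Set (Fin n → ℝ))) < k →
    (U : Set (Fin n → ℝ)) ⊆ Set.extremePoints ℝ (convexHull ℝ (V : Set (Fin n → ℝ))) →
    IsExposed ℝ (convexHull ℝ (V : Set (Fin n → ℝ))) (convexHull ℝ (U : Set (Fin n → ℝ))) →
    ∀ x ∈ U, ∀ g : (Fin n → ℝ) →L[ℝ] ℝ, (∃ u ∈ U, g x < g u) →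
    ∃ y ∈ U, g x < g y ∧
      IsExposed ℝ (convexHull ℝ (V : Set (Fin n → ℝ))) (segment ℝ x y) := by
  intro k
  induction k with
  | zero => intro U hdim; omega
  | succ k IH =>
    intro U hdim hUV hexp x hxU g hgx
    obtain ⟨u₁, hu₁U, hu₁⟩ := hgx
    have hu₁x : u₁ ≠ x := by intro hEq; rw [hEq] at hu₁; exact lt_irrefl _ hu₁
    classical
    set P := convexHull ℝ (V : Set (Fin n → ℝ)) with hP
    have hUP : convexHull ℝ (U : Set (Fin n → ℝ)) ⊆ P := hexp.subset
    have hUne : U.Nonempty := ⟨x, hxU⟩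
    have hxex : x ∈ Set.extremePoints ℝ (convexHull ℝ (U : Set (Fin n → ℝ))) :=
      extreme_restrict hUP (hUV (Finset.mem_coe.2 hxU))
        (subset_convexHull ℝ _ (Finset.mem_coe.2 hxU))
    obtain ⟨d, hd⟩ := exists_exposing U hxex
    set U' := U.erase x with hU'
    have hU'ne : U'.Nonempty := ⟨u₁, Finset.mem_erase.2 ⟨hu₁x, hu₁U⟩⟩
    have hdpos : ∀ u ∈ U', 0 < d x - d u := by
      intro u hu
      have := hd u (Finset.mem_erase.1 hu).2 (Finset.mem_erase.1 hu).1
      linarith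
    set r : (Fin n → ℝ) → ℝ := fun u => (g u - g x) / (d x - d u) with hr
    set lam := U'.sup' hU'ne r with hlam
    have hlampos : 0 < lam := by
      have h1 : r u₁ ≤ lam := Finset.le_sup' r (Finset.mem_erase.2 ⟨hu₁x, hu₁U⟩)
      have h2 : 0 < r u₁ :=
        div_pos (by linarith) (hdpos u₁ (Finset.mem_erase.2 ⟨hu₁x, hu₁U⟩))
      linarith
    set h : (Fin n → ℝ) →L[ℝ] ℝ := g + lam • d with hh
    have happ : ∀ z, h z = g z + lam * d z := by
      intro z; simp [hh, smul_eq_mul]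
    have hmax : ∀ u ∈ U, h u ≤ h x := by
      intro u huU
      by_cases hux : u = x
      · rw [hux]
      · have huU' : u ∈ U' := Finset.mem_erase.2 ⟨hux, huU⟩
        have h1 : r u ≤ lam := Finset.le_sup' r huU'
        have h2 := hdpos u huU'
        rw [happ, happ]
        have h3 := (div_le_iff₀ h2).1 h1
        nlinarith
    obtain ⟨u₂, hu₂U', hu₂⟩ := Finset.exists_mem_eq_sup' hU'ne r
    have hu₂U : u₂ ∈ U := (Finset.mem_erase.1 hu₂U').2
    have hu₂x : u₂ ≠ x := (Finset.mem_erase.1 hu₂U').1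
    have hd₂ := hdpos u₂ hu₂U'
    have h5 : r u₂ * (d x - d u₂) = g u₂ - g x := div_mul_cancel₀ _ (ne_of_gt hd₂)
    have hlam2 : lam = r u₂ := hu₂
    have hu₂tie : h u₂ = h x := by
      rw [happ, happ, hlam2]
      linear_combination -h5
    have hu₂imp : g x < g u₂ := by
      have : g u₂ - g x = lam * (d x - d u₂) := by rw [hlam2]; linarith [h5]
      nlinarith
    by_cases hconst : ∀ u ∈ U, h u = h x
    · -- the tie face is everything: any neighbor improves g
      obtain ⟨y, hyU, hyx, hseg⟩ := neigh V hV
        (Module.finrank ℝ (vectorSpan ℝ (U : Set (Fin n → ℝ))) + 1) U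
        (Nat.lt_succ_self _) hUV hexp x hxU ⟨u₁, hu₁U, hu₁x⟩
      refine ⟨y, hyU, ?_, hseg⟩
      have htie := hconst y hyU
      rw [happ, happ] at htie
      have hdy : d y < d x := hd y hyU hyx
      nlinarith
    · push_neg at hconst
      set U₂ := U.filter (fun u => h u = h x) with hU₂
      have hxU₂ : x ∈ U₂ := Finset.mem_filter.2 ⟨hxU, rfl⟩
      have hu₂U₂ : u₂ ∈ U₂ := Finset.mem_filter.2 ⟨hu₂U, hu₂tie⟩
      have hdim₂ : Module.finrank ℝ (vectorSpan ℝ (U₂ : Set (Fin n → ℝ))) < k :=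
        lt_of_lt_of_le (dim_lt U h hxU hconst) (Nat.lt_succ_iff.1 hdim)
      have hexp₂ := exposed_filter V hV U hUne hexp h hxU hmax
      have hUV₂ : (U₂ : Set (Fin n → ℝ)) ⊆ Set.extremePoints ℝ P := by
        intro z hz
        exact hUV (Finset.mem_coe.2 (Finset.filter_subset _ U (Finset.mem_coe.1 hz)))
      obtain ⟨y, hyU₂, hyimp, hseg⟩ := IH U₂ hdim₂ hUV₂ hexp₂ x hxU₂ g ⟨u₂, hu₂U₂, hu₂imp⟩
      exact ⟨y, Finset.filter_subset _ U hyU₂, hyimp, hseg⟩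
end S4

section S5
variable {α : Type*}

/-- Last element of the path `v :: L`. -/
def lastv (v : α) (L : List α) : α := (v :: L).getLast (List.cons_ne_nil v L)

@[simp] lemma lastv_nil (v : α) : lastv v [] = v := rfl

lemma lastv_cons (v a : α) (L : List α) : lastv v (a :: L) = lastv a L :=
  List.getLast_cons (List.cons_ne_nil a L)

lemma lastv_mem (v : α) (L : List α) : lastv v L ∈ v :: L :=
  List.getLast_mem _

lemma lastv_append (v : α) (L₁ L₂ : List α) :
    lastv v (L₁ ++ L₂) = lastv (lastv v L₁) L₂ := by
  induction L₁ generalizing v with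
  | nil => simp
  | cons a L₁ IH => rw [List.cons_append, lastv_cons, IH, lastv_cons]

lemma chain_append {R : α → α → Prop} (v : α) (L₁ L₂ : List α)
    (h₁ : List.Chain R v L₁) (h₂ : List.Chain R (lastv v L₁) L₂) :
    List.Chain R v (L₁ ++ L₂) := by
  induction L₁ generalizing v with
  | nil => simpa using h₂
  | cons a L₁ IH =>
    rw [List.Chain, List.chain_cons] at h₁
    rw [lastv_cons] at h₂
    exact List.Chain.cons h₁.1 (IH a h₁.2 h₂)
end S5

section S6
variable {n : ℕ}

lemma chain_bound (V : Finset (Fin n → ℝ)) (f : Fin n → ℝ) :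
    ∀ L : List (Fin n → ℝ), ∀ v : Fin n → ℝ, (∀ z ∈ L, z ∈ V) →
    List.Chain (fun a b => dotp f a < dotp f b) v L →
    L.length ≤ ((V.image (fun u => dotp f u)).filter (fun t => dotp f v < t)).card := by
  classical
  intro L
  induction L with
  | nil => intro v _ _; simp
  | cons y L IH =>
    intro v hmem hch
    rw [List.Chain, List.chain_cons] at hch
    have h1 : dotp f v < dotp f y := hch.1
    have hyV : y ∈ V := hmem y (List.mem_cons_self)
    have h2 := IH y (fun z hz => hmem z (List.mem_cons_of_mem y hz)) hch.2
    have hss : (V.image (fun u => dotp f u)).filter (fun t => dotp f y < t) ⊂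
        (V.image (fun u => dotp f u)).filter (fun t => dotp f v < t) := by
      rw [Finset.ssubset_iff_of_subset]
      · refine ⟨dotp f y, ?_, ?_⟩
        · exact Finset.mem_filter.2 ⟨Finset.mem_image_of_mem _ hyV, h1⟩
        · intro hmem'
          exact lt_irrefl _ (Finset.mem_filter.1 hmem').2
      · intro t ht
        obtain ⟨ht1, ht2⟩ := Finset.mem_filter.1 ht
        exact Finset.mem_filter.2 ⟨ht1, lt_trans h1 ht2⟩
    have h3 := Finset.card_lt_card hss
    simp only [List.length_cons]
    omega
end S6

section S7
variable {n : ℕ}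

/-- The relation along our monotone paths: an edge increasing both `c` and `f`. -/
def pathRel (P : Set (Fin n → ℝ)) (c f : Fin n → ℝ) :
    (Fin n → ℝ) → (Fin n → ℝ) → Prop :=
  fun x y => IsEdgeOf P x y ∧ dotp c x < dotp c y ∧ dotp f x < dotp f y

/-- Monotone path within a face on which `c - lam'⬝f` is constant, reaching the c-max vertex. -/
lemma inner_path (V : Finset (Fin n → ℝ)) (hV : V.Nonempty) (c f : Fin n → ℝ)
    (lam' : ℝ) (hlam' : 0 < lam') :
    ∀ j : ℕ, ∀ W : Finset (Fin n → ℝ),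
    (W : Set (Fin n → ℝ)) ⊆ Set.extremePoints ℝ (convexHull ℝ (V : Set (Fin n → ℝ))) →
    IsExposed ℝ (convexHull ℝ (V : Set (Fin n → ℝ))) (convexHull ℝ (W : Set (Fin n → ℝ))) →
    (∀ u ∈ W, ∀ u' ∈ W,
      dotp c u - lam' * dotp f u = dotp c u' - lam' * dotp f u') →
    ∀ x ∈ W, (W.filter (fun u => dotp c x < dotp c u)).card < j →
    ∃ L : List (Fin n → ℝ),
      List.Chain (pathRel (convexHull ℝ (V : Set (Fin n → ℝ))) c f) x L ∧
      (∀ z ∈ L, z ∈ W) ∧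
      (∀ u ∈ W, dotp c u ≤ dotp c (lastv x L)) := by
  classical
  intro j
  induction j with
  | zero => intro W _ _ _ x _ h; omega
  | succ j IH =>
    intro W hWV hexp hconst x hxW hcard
    by_cases hmax : ∀ u ∈ W, dotp c u ≤ dotp c x
    · exact ⟨[], List.Chain.nil, by simp, by simpa using hmax⟩
    · push_neg at hmax
      obtain ⟨u, huW, hcu⟩ := hmax
      obtain ⟨y, hyW, hcy, hseg⟩ := core V hV
        (Module.finrank ℝ (vectorSpan ℝ (W : Set (Fin n → ℝ))) + 1) W
        (Nat.lt_succ_self _) hWV hexp x hxW (dclm c)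
        ⟨u, huW, by simpa using hcu⟩
      rw [dclm_apply, dclm_apply] at hcy
      have hxy : x ≠ y := fun hEq => by rw [hEq] at hcy; exact lt_irrefl _ hcy
      have hfy : dotp f x < dotp f y := by
        have heq := hconst x hxW y hyW
        by_contra hcon
        push_neg at hcon
        nlinarith
      have hedge : IsEdgeOf (convexHull ℝ (V : Set (Fin n → ℝ))) x y :=
        ⟨hxy, hWV (Finset.mem_coe.2 hxW), hWV (Finset.mem_coe.2 hyW), hseg⟩
      have hmeas : (W.filter (fun u => dotp c y < dotp c u)).card < j := by
        have hss : W.filter (fun u => dotp c y < dotp c u) ⊂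
            W.filter (fun u => dotp c x < dotp c u) := by
          rw [Finset.ssubset_iff_of_subset]
          · exact ⟨y, Finset.mem_filter.2 ⟨hyW, hcy⟩,
              fun hmem => lt_irrefl _ (Finset.mem_filter.1 hmem).2⟩
          · intro t ht
            obtain ⟨ht1, ht2⟩ := Finset.mem_filter.1 ht
            exact Finset.mem_filter.2 ⟨ht1, lt_trans hcy ht2⟩
        have := Finset.card_lt_card hss
        omega
      obtain ⟨L', hch', hmem', hmax'⟩ := IH W hWV hexp hconst y hyW hmeas
      refine ⟨y :: L', List.Chain.cons ⟨hedge, hcy, hfy⟩ hch', ?_, ?_⟩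
      · intro z hz
        rcases List.mem_cons.1 hz with h | h
        · rw [h]; exact hyW
        · exact hmem' z h
      · rw [lastv_cons]
        exact hmax'

/-- The main parametric construction. -/
lemma main_path (V : Finset (Fin n → ℝ)) (hV : V.Nonempty) (c f : Fin n → ℝ) :
    ∀ k : ℕ, ∀ W : Finset (Fin n → ℝ), ∀ lam : ℝ, 0 ≤ lam →
    (W : Set (Fin n → ℝ)) ⊆ Set.extremePoints ℝ (convexHull ℝ (V : Set (Fin n → ℝ))) →
    IsExposed ℝ (convexHull ℝ (V : Set (Fin n → ℝ))) (convexHull ℝ (W : Set (Fin n → ℝ))) →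
    ∀ v ∈ W,
    (∀ u ∈ W, dotp c u - lam * dotp f u ≤ dotp c v - lam * dotp f v) →
    (∀ u ∈ W, dotp c u - lam * dotp f u = dotp c v - lam * dotp f v → dotp c u ≤ dotp c v) →
    ((W.image (fun u => dotp f u)).filter (fun t => dotp f v < t)).card < k →
    ∃ L : List (Fin n → ℝ),
      List.Chain (pathRel (convexHull ℝ (V : Set (Fin n → ℝ))) c f) v L ∧
      (∀ z ∈ L, z ∈ W) ∧
      (∀ u ∈ W, dotp c u ≤ dotp c (lastv v L)) := by
  classical
  intro k
  induction k with
  | zero => intro W lam _ _ _ v _ _ _ h; omega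
  | succ k IH =>
    intro W lam hlam hWV hexp v hvW Hmax Htie hmeas
    set T := W.filter (fun u => dotp f v < dotp f u) with hT
    have hfpos : ∀ u ∈ T, 0 < dotp f u - dotp f v := by
      intro u hu
      have := (Finset.mem_filter.1 hu).2
      linarith
    have hbase : (∀ u ∈ W, dotp f u ≤ dotp f v → dotp c u ≤ dotp c v) := by
      intro u huW hfu
      rcases eq_or_lt_of_le hfu with hEq | hlt
      · have h1 := Hmax u huW
        rw [hEq] at h1
        linarith
      · have h1 := Hmax u huW
        nlinarith
    by_cases hTne : T.Nonempty
    · set r : (Fin n → ℝ) → ℝ :=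
        fun u => (dotp c u - dotp c v) / (dotp f u - dotp f v) with hr
      set lam' := T.sup' hTne r with hlam'
      have hrlam : ∀ u ∈ T, r u ≤ lam := by
        intro u hu
        have h2 := hfpos u hu
        have h1 := Hmax u (Finset.filter_subset _ _ hu)
        rw [hr]
        rw [div_le_iff₀ h2]
        nlinarith
      have hlam'le : lam' ≤ lam := Finset.sup'_le hTne r hrlam
      obtain ⟨u₂, hu₂T, hu₂⟩ := Finset.exists_mem_eq_sup' hTne r
      have hu₂W : u₂ ∈ W := Finset.filter_subset _ _ hu₂T
      have hu₂f := hfpos u₂ hu₂T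
      by_cases hpos : 0 < lam'
      · -- pivot step
        have h5 : lam' * (dotp f u₂ - dotp f v) = dotp c u₂ - dotp c v := by
          rw [hlam', hu₂]
          exact div_mul_cancel₀ _ (ne_of_gt hu₂f)
        have hcu₂ : dotp c v < dotp c u₂ := by nlinarith
        have hlamlt : lam' < lam := by
          rcases lt_or_eq_of_le hlam'le with h | h
          · exact h
          · exfalso
            have htie : dotp c u₂ - lam * dotp f u₂ = dotp c v - lam * dotp f v := by
              rw [← h]; linarith
            exact absurd (Htie u₂ hu₂W htie) (not_le.2 hcu₂)
        set hfun : (Fin n → ℝ) →L[ℝ] ℝ := dclm c - lam' • dclm f with hhfun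
        have hfapp : ∀ z, hfun z = dotp c z - lam' * dotp f z := by
          intro z; simp [hhfun, smul_eq_mul]
        set W' := W.filter (fun u => hfun u = hfun v) with hW'
        have Hmax' : ∀ u ∈ W, hfun u ≤ hfun v := by
          intro u huW
          rw [hfapp, hfapp]
          by_cases huT : u ∈ T
          · have h2 := hfpos u huT
            have h1 : r u ≤ lam' := Finset.le_sup' r huT
            have h6 : r u * (dotp f u - dotp f v) = dotp c u - dotp c v :=
              div_mul_cancel₀ _ (ne_of_gt h2)
            nlinarith
          · have hfle : dotp f u ≤ dotp f v := by
              by_contra hcon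
              push_neg at hcon
              exact huT (Finset.mem_filter.2 ⟨huW, hcon⟩)
            have h1 := Hmax u huW
            nlinarith
        have hvW' : v ∈ W' := Finset.mem_filter.2 ⟨hvW, rfl⟩
        have hu₂W' : u₂ ∈ W' := Finset.mem_filter.2 ⟨hu₂W, by
          rw [hfapp, hfapp]; linarith⟩
        have hWV' : (W' : Set (Fin n → ℝ)) ⊆
            Set.extremePoints ℝ (convexHull ℝ (V : Set (Fin n → ℝ))) := by
          intro z hz
          exact hWV (Finset.mem_coe.2 (Finset.filter_subset _ W (Finset.mem_coe.1 hz)))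
        have hexp' := exposed_filter V hV W ⟨v, hvW⟩ hexp hfun hvW Hmax'
        have hconst' : ∀ u ∈ W', ∀ u' ∈ W',
            dotp c u - lam' * dotp f u = dotp c u' - lam' * dotp f u' := by
          intro u hu u' hu'
          have h1 := (Finset.mem_filter.1 hu).2
          have h2 := (Finset.mem_filter.1 hu').2
          rw [hfapp, hfapp] at h1 h2
          rw [h1, h2]
        obtain ⟨L₁, hL₁chain, hL₁mem, hL₁max⟩ := inner_path V hV c f lam' hpos
          ((W'.filter (fun u => dotp c v < dotp c u)).card + 1) W' hWV' hexp' hconst'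
          v hvW' (Nat.lt_succ_self _)
        set w := lastv v L₁ with hw
        have hwW' : w ∈ W' := by
          rcases List.mem_cons.1 (lastv_mem v L₁) with h | h
          · rw [hw, h]; exact hvW'
          · exact hL₁mem w h
        have hwW : w ∈ W := Finset.filter_subset _ _ hwW'
        have hcw : dotp c v < dotp c w := lt_of_lt_of_le hcu₂ (hL₁max u₂ hu₂W')
        have hfw : dotp f v < dotp f w := by
          have := hconst' v hvW' w hwW'
          nlinarith
        have Hmax'' : ∀ u ∈ W,
            dotp c u - lam' * dotp f u ≤ dotp c w - lam' * dotp f w := by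
          intro u huW
          have h1 := Hmax' u huW
          rw [hfapp, hfapp] at h1
          have h2 := hconst' v hvW' w hwW'
          linarith
        have Htie'' : ∀ u ∈ W,
            dotp c u - lam' * dotp f u = dotp c w - lam' * dotp f w →
            dotp c u ≤ dotp c w := by
          intro u huW hEq
          have h2 := hconst' v hvW' w hwW'
          have huW' : u ∈ W' := Finset.mem_filter.2 ⟨huW, by
            rw [hfapp, hfapp]; linarith⟩
          exact hL₁max u huW'
        have hmeas'' : ((W.image (fun u => dotp f u)).filter
            (fun t => dotp f w < t)).card < k := by
          have hss : (W.image (fun u => dotp f u)).filter (fun t => dotp f w < t) ⊂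
              (W.image (fun u => dotp f u)).filter (fun t => dotp f v < t) := by
            rw [Finset.ssubset_iff_of_subset]
            · refine ⟨dotp f w, Finset.mem_filter.2 ⟨Finset.mem_image_of_mem _ hwW, hfw⟩,
                fun hmem => lt_irrefl _ (Finset.mem_filter.1 hmem).2⟩
            · intro t ht
              obtain ⟨ht1, ht2⟩ := Finset.mem_filter.1 ht
              exact Finset.mem_filter.2 ⟨ht1, lt_trans hfw ht2⟩
          have := Finset.card_lt_card hss
          omega
        obtain ⟨L₂, hch2, hmem2, hmax2⟩ := IH W lam' (le_of_lt hpos) hWV hexp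
          w hwW Hmax'' Htie'' hmeas''
        refine ⟨L₁ ++ L₂, chain_append v L₁ L₂ hL₁chain (by rw [← hw]; exact hch2), ?_, ?_⟩
        · intro z hz
          rcases List.mem_append.1 hz with h | h
          · exact Finset.filter_subset _ _ (hL₁mem z h)
          · exact hmem2 z h
        · rw [lastv_append, ← hw]
          exact hmax2
      · -- lam' ≤ 0 : v is already c-maximal over W
        refine ⟨[], List.Chain.nil, by simp, ?_⟩
        simp only [lastv_nil]
        intro u huW
        by_cases huT : u ∈ T
        · have h2 := hfpos u huT
          have h1 : r u ≤ lam' := Finset.le_sup' r huT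
          have h6 : r u * (dotp f u - dotp f v) = dotp c u - dotp c v :=
            div_mul_cancel₀ _ (ne_of_gt h2)
          have h7 : r u ≤ 0 := le_trans h1 (not_lt.1 hpos)
          nlinarith
        · have hfle : dotp f u ≤ dotp f v := by
            by_contra hcon
            push_neg at hcon
            exact huT (Finset.mem_filter.2 ⟨huW, hcon⟩)
          exact hbase u huW hfle
    · -- no vertex has larger f-value: v is c-maximal over W
      refine ⟨[], List.Chain.nil, by simp, ?_⟩
      simp only [lastv_nil]
      intro u huW
      have hfle : dotp f u ≤ dotp f v := by
        by_contra hcon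
        push_neg at hcon
        exact hTne ⟨u, Finset.mem_filter.2 ⟨huW, hcon⟩⟩
      exact hbase u huW hfle
end S7

section S8
variable {n : ℕ}

lemma chain_to_path {R : (Fin n → ℝ) → (Fin n → ℝ) → Prop} :
    ∀ (L : List (Fin n → ℝ)) (v : Fin n → ℝ), List.Chain R v L →
    ∃ p : Fin (L.length + 1) → (Fin n → ℝ),
      p 0 = v ∧ p (Fin.last L.length) = lastv v L ∧
      (∀ i, p i ∈ v :: L) ∧
      ∀ i : Fin L.length, R (p i.castSucc) (p i.succ) := by
  intro L
  induction L with
  | nil =>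
    intro v _
    exact ⟨fun _ => v, rfl, rfl, fun _ => List.mem_cons_self, fun i => i.elim0⟩
  | cons a L IH =>
    intro v hch
    rw [List.Chain, List.chain_cons] at hch
    obtain ⟨q, hq0, hqlast, hqmem, hqstep⟩ := IH a hch.2
    refine ⟨Fin.cases v q, by simp, ?_, ?_, ?_⟩
    · simp only [List.length_cons]
      have h1 : Fin.last (L.length + 1) = (Fin.last L.length).succ := by ext; simp
      rw [h1]
      simp only [Fin.cases_succ]
      rw [hqlast, lastv_cons]
    · intro i
      refine Fin.cases ?_ ?_ i
      · simp
      · intro j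
        simp only [Fin.cases_succ]
        exact List.mem_cons_of_mem v (hqmem j)
    · intro i
      refine Fin.cases ?_ ?_ i
      · simp only [Fin.castSucc_zero, Fin.cases_zero]
        have h2 : (Fin.succ (0 : Fin (L.length + 1))) = (0 : Fin (L.length + 1)).succ := rfl
        simp only [Fin.cases_succ, hq0]
        exact hch.1
      · intro j
        simp only [← Fin.succ_castSucc, Fin.cases_succ]
        exact hqstep j

end S8


/-- **Corollary 1 of \[01simplex\] (length bound for coherent monotone paths).**
Let `P ⊆ ℝ^n` be a polytope with vertex set `V`, and `c, f ∈ ℝ^n`. Let `F` be the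
`f`-minimal face of `P` and `v` a vertex of `P` maximizing `cᵀx` over `F`. Then
there is a `c`-monotone path from `v` to a vertex maximizing `cᵀx` over `P` whose
length is at most `|{fᵀw : w ∈ V}| − 1`. -/
theorem coherent_path_length_bound {n : ℕ} (P : Set (Fin n → ℝ))
    (hP : IsPolytope P) (c f : Fin n → ℝ)
    (F : Set (Fin n → ℝ))
    (hF : F = {x ∈ P | ∀ y ∈ P, dotp f x ≤ dotp f y})
    (v : Fin n → ℝ) (hv : IsVertexOf P v) (hvF : v ∈ F)
    (hvmax : ∀ x ∈ F, dotp c x ≤ dotp c v) :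
    ∃ (m : ℕ) (p : Fin (m + 1) → (Fin n → ℝ)),
      m + 1 ≤ ((fun w => dotp f w) '' (Set.extremePoints ℝ P)).ncard ∧
      IsMonotonePath P c m p ∧
      p 0 = v ∧
      (∀ x ∈ P, dotp c x ≤ dotp c (p (Fin.last m))) := by
  classical
  obtain ⟨S, hSne, hPS⟩ := hP
  have hPconv : Convex ℝ P := hPS ▸ convex_convexHull ℝ _
  have hPcomp : IsCompact P := hPS ▸ S.finite_toSet.isCompact_convexHull ℝ
  have hextfin : (Set.extremePoints ℝ P).Finite :=
    Set.Finite.subset S.finite_toSet (by rw [hPS]; exact extremePoints_convexHull_subset)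
  set V := hextfin.toFinset with hVdef
  have hVcoe : (V : Set (Fin n → ℝ)) = Set.extremePoints ℝ P := hextfin.coe_toFinset
  have hPV : P = convexHull ℝ (V : Set (Fin n → ℝ)) := by
    have h1 := closure_convexHull_extremePoints hPcomp hPconv
    have h2 : IsClosed (convexHull ℝ (Set.extremePoints ℝ P)) := by
      rw [← hVcoe]
      exact (V.finite_toSet.isCompact_convexHull ℝ).isClosed
    rw [hVcoe]
    conv_lhs => rw [← h1]
    rw [h2.closure_eq]
  have hvP : v ∈ P := by rw [hF] at hvF; exact hvF.1
  have hvV : v ∈ V := by rw [← Finset.mem_coe, hVcoe]; exact hv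
  have hV : V.Nonempty := ⟨v, hvV⟩
  have hfmin : ∀ y ∈ P, dotp f v ≤ dotp f y := by rw [hF] at hvF; exact hvF.2
  have hVsubP : (V : Set (Fin n → ℝ)) ⊆ P := by
    rw [hVcoe]; exact extremePoints_subset
  have hcmax_eqf : ∀ u ∈ V, dotp f u = dotp f v → dotp c u ≤ dotp c v := by
    intro u huV hfu
    apply hvmax
    rw [hF]
    refine ⟨hVsubP (Finset.mem_coe.2 huV), fun y hy => ?_⟩
    rw [hfu]
    exact hfmin y hy
  obtain ⟨lam, hlam0, Hmax, Htie⟩ :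
      ∃ lam : ℝ, 0 ≤ lam ∧
        (∀ u ∈ V, dotp c u - lam * dotp f u ≤ dotp c v - lam * dotp f v) ∧
        (∀ u ∈ V, dotp c u - lam * dotp f u = dotp c v - lam * dotp f v →
          dotp c u ≤ dotp c v) := by
    set T := V.filter (fun u => dotp f v < dotp f u) with hT
    by_cases hTne : T.Nonempty
    · set r : (Fin n → ℝ) → ℝ :=
        fun u => (dotp c u - dotp c v) / (dotp f u - dotp f v) with hr
      set lam := max 0 (T.sup' hTne r) + 1 with hlam
      have hlampos : 0 < lam := by
        have := le_max_left 0 (T.sup' hTne r)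
        rw [hlam]; linarith
      have hkey : ∀ u ∈ V, dotp f v < dotp f u →
          dotp c u - lam * dotp f u < dotp c v - lam * dotp f v := by
        intro u huV hfu
        have h2 : 0 < dotp f u - dotp f v := by linarith
        have h1 : r u ≤ max 0 (T.sup' hTne r) :=
          le_trans (Finset.le_sup' r (Finset.mem_filter.2 ⟨huV, hfu⟩))
            (le_max_right _ _)
        have h6 : r u * (dotp f u - dotp f v) = dotp c u - dotp c v :=
          div_mul_cancel₀ _ (ne_of_gt h2)
        have h7 : r u < lam := by rw [hlam]; linarith
        nlinarith
      refine ⟨lam, le_of_lt hlampos, ?_, ?_⟩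
      · intro u huV
        rcases eq_or_lt_of_le (hfmin u (hVsubP (Finset.mem_coe.2 huV))) with hEq | hlt
        · have := hcmax_eqf u huV hEq.symm
          rw [← hEq]
          linarith
        · exact le_of_lt (hkey u huV hlt)
      · intro u huV hEq
        rcases eq_or_lt_of_le (hfmin u (hVsubP (Finset.mem_coe.2 huV))) with hEq2 | hlt
        · exact hcmax_eqf u huV hEq2.symm
        · exact absurd hEq (ne_of_lt (hkey u huV hlt))
    · refine ⟨0, le_refl 0, ?_, ?_⟩
      · intro u huV
        have hfle : dotp f u ≤ dotp f v := by
          by_contra hcon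
          push_neg at hcon
          exact hTne ⟨u, Finset.mem_filter.2 ⟨huV, hcon⟩⟩
        have hfeq : dotp f u = dotp f v :=
          le_antisymm hfle (hfmin u (hVsubP (Finset.mem_coe.2 huV)))
        have := hcmax_eqf u huV hfeq
        linarith
      · intro u huV _
        have hfle : dotp f u ≤ dotp f v := by
          by_contra hcon
          push_neg at hcon
          exact hTne ⟨u, Finset.mem_filter.2 ⟨huV, hcon⟩⟩
        exact hcmax_eqf u huV
          (le_antisymm hfle (hfmin u (hVsubP (Finset.mem_coe.2 huV))))
  have hWV0 : (V : Set (Fin n → ℝ)) ⊆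
      Set.extremePoints ℝ (convexHull ℝ (V : Set (Fin n → ℝ))) := by
    rw [← hPV, hVcoe]
  obtain ⟨L, hchain, hmem, hlastmax⟩ := main_path V hV c f
    (((V.image (fun u => dotp f u)).filter (fun t => dotp f v < t)).card + 1)
    V lam hlam0 hWV0 (isExposed_self _) v hvV Hmax Htie (Nat.lt_succ_self _)
  obtain ⟨p, hp0, hplast, hpmem, hpstep⟩ := chain_to_path L v hchain
  refine ⟨L.length, p, ?_, ⟨?_, ?_⟩, hp0, ?_⟩
  · -- length bound
    have hb1 := chain_bound V f L v hmem
      (List.Chain.imp (fun a b h => h.2.2) hchain)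
    have hss : (V.image (fun u => dotp f u)).filter (fun t => dotp f v < t) ⊂
        V.image (fun u => dotp f u) := by
      rw [Finset.ssubset_iff_of_subset (Finset.filter_subset _ _)]
      exact ⟨dotp f v, Finset.mem_image_of_mem _ hvV,
        fun hmem' => lt_irrefl _ (Finset.mem_filter.1 hmem').2⟩
    have hb2 := Finset.card_lt_card hss
    have him : ((fun w => dotp f w) '' (Set.extremePoints ℝ P)).ncard
        = (V.image (fun u => dotp f u)).card := by
      rw [← hVcoe, ← Finset.coe_image, Set.ncard_coe_finset]
    omega
  · -- vertices
    intro i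
    rcases List.mem_cons.1 (hpmem i) with h | h
    · rw [h]; exact hv
    · have : p i ∈ V := hmem _ h
      show p i ∈ Set.extremePoints ℝ P
      rw [← hVcoe]
      exact Finset.mem_coe.2 this
  · -- edges and monotonicity
    intro i
    obtain ⟨hedge, hc, _⟩ := hpstep i
    rw [← hPV] at hedge
    exact ⟨hedge, hc⟩
  · -- maximality at the end
    intro x hxP
    have hx' : x ∈ convexHull ℝ (V : Set (Fin n → ℝ)) := by rw [← hPV]; exact hxP
    have h1 : dclm c x ≤ V.sup' hV (dclm c) := hull_le_sup' V hV (dclm c) hx'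
    obtain ⟨u₀, hu₀V, hu₀⟩ := Finset.exists_mem_eq_sup' hV (dclm c)
    have h2 := hlastmax u₀ hu₀V
    rw [hu₀, dclm_apply, dclm_apply] at h1
    rw [hplast]
    exact le_trans h1 h2
end
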